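/- arXiv:1501.02088 — 4 statements merged into one kernel-verified Lean document; each statement's English description precedes it below -/
import Mathlib

section
/- The set L²_s of slice functions in L² is a closed real-linear subspace of L². In particular, if a sequence (f_n) of slice functions in L² converges in L² norm to f ∈ L², then f (has a representative which) is a slice function. -/
set_option synthInstance.maxHeartbeats 1000000
set_option maxHeartbeats 1000000


open MeasureTheory Real Set
open scoped ENNReal

noncomputable section

instance : MeasurableSpace (Quaternion ℝ) := borel _
instance : BorelSpace (Quaternion ℝ) := ⟨rfl⟩

/-- The 2-sphere of imaginary units `S = {q ∈ ℍ : q² = -1}`. -/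
def Sph : Set (Quaternion ℝ) := {q | q ^ 2 = -1}

/-- `qexp t I = exp (t I) = cos t + (sin t) I`. -/
def qexp (t : ℝ) (I : Quaternion ℝ) : Quaternion ℝ :=
  Real.cos t • (1 : Quaternion ℝ) + Real.sin t • I

/-- A function on the unit sphere of `ℍ` is a *slice function* if it satisfies the
representation formula
`f(exp(tJ)) = ½[f(exp(tI)) + f(exp(-tI))] + (JI/2)[f(exp(-tI)) − f(exp(tI))]`
for all imaginary units `I, J` and all real `t`. -/
def IsSlice (f : Quaternion ℝ → Quaternion ℝ) : Prop :=
  ∀ I ∈ Sph, ∀ J ∈ Sph, ∀ t : ℝ,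
    f (qexp t J) =
      (f (qexp t I) + f (qexp (-t) I)) / 2 +
        (J * I / 2) * (f (qexp (-t) I) - f (qexp t I))

/-- `σ` is the rotation-invariant probability measure on the sphere `S` of imaginary
units (rotations of `S` are realized as conjugations by unit quaternions). -/
structure IsSphereMeasure (σ : Measure (Quaternion ℝ)) : Prop where
  prob : IsProbabilityMeasure σ
  supp : σ Sphᶜ = 0
  rotInv : ∀ u : Quaternion ℝ, ‖u‖ = 1 → Measure.map (fun q => u * q * u⁻¹) σ = σ

/-- Normalized Lebesgue measure `dt/2π` on `[0, 2π)`. -/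
def arcMeasure : Measure ℝ :=
  (ENNReal.ofReal (2 * π))⁻¹ • volume.restrict (Ico 0 (2 * π))

/-- The measure `Σ` on the unit sphere `∂B` of `ℍ`: the pushforward of `σ ⊗ dt/2π`
under `(I, t) ↦ exp (t I)`. -/
def bMeasure (σ : Measure (Quaternion ℝ)) : Measure (Quaternion ℝ) :=
  Measure.map (fun p : Quaternion ℝ × ℝ => qexp p.2 p.1) (σ.prod arcMeasure)

/-- The `n`-th Fourier coefficient of `f` on the slice circle through the
imaginary unit `I`: `(1/2π) ∫₀^{2π} exp(−ntI) f(exp(tI)) dt`. -/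
def fcoeff (f : Quaternion ℝ → Quaternion ℝ) (n : ℤ) (I : Quaternion ℝ) : Quaternion ℝ :=
  (2 * π)⁻¹ • ∫ t in Ico (0 : ℝ) (2 * π), qexp (-(n * t)) I * f (qexp t I)

/-- `Pφ` is (a representative of) the orthogonal projection of `φ ∈ L²(∂B, Σ; ℍ)` onto the
closed subspace `L²_s` of slice functions, for the real inner product
`⟨f, g⟩ = ∫ Re (conj g * f) dΣ`: `Pφ` is a slice function in `L²` and `φ - Pφ` is orthogonal
to every slice function in `L²`. -/
def IsProjection (σ : Measure (Quaternion ℝ)) (φ Pφ : Quaternion ℝ → Quaternion ℝ) : Prop :=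
  MemLp φ 2 (bMeasure σ) ∧ IsSlice Pφ ∧ MemLp Pφ 2 (bMeasure σ) ∧
    ∀ g : Quaternion ℝ → Quaternion ℝ, IsSlice g → MemLp g 2 (bMeasure σ) →
      ∫ q, (star (g q) * (φ q - Pφ q)).re ∂(bMeasure σ) = 0

namespace SliceAux

open scoped Quaternion

abbrev H := Quaternion ℝ

lemma mem_Sph_iff (q : H) :
    q ∈ Sph ↔ q.re = 0 ∧ q.imI ^ 2 + q.imJ ^ 2 + q.imK ^ 2 = 1 := by
  constructor
  · intro h
    have h' : q * q = -1 := by rw [← pow_two]; exact h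
    have h1 := congrArg QuaternionAlgebra.re h'
    have h2 := congrArg QuaternionAlgebra.imI h'
    have h3 := congrArg QuaternionAlgebra.imJ h'
    have h4 := congrArg QuaternionAlgebra.imK h'
    simp [Quaternion.re_mul, Quaternion.imI_mul, Quaternion.imJ_mul, Quaternion.imK_mul] at h1 h2 h3 h4
    ring_nf at h1 h2 h3 h4
    have hre : q.re = 0 := by
      by_contra hre
      have hb : q.imI = 0 := (mul_eq_zero.1 (by linarith : q.re * q.imI = 0)).resolve_left hre
      have hc : q.imJ = 0 := (mul_eq_zero.1 (by linarith : q.re * q.imJ = 0)).resolve_left hre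
      have hd : q.imK = 0 := (mul_eq_zero.1 (by linarith : q.re * q.imK = 0)).resolve_left hre
      rw [hb, hc, hd] at h1
      nlinarith
    refine ⟨hre, by rw [hre] at h1; nlinarith⟩
  · rintro ⟨h0, h1⟩
    show q ^ 2 = -1
    rw [pow_two]
    ext <;>
      simp [Quaternion.re_mul, Quaternion.imI_mul, Quaternion.imJ_mul, Quaternion.imK_mul, h0] <;>
      nlinarith

lemma Sph_re {q : H} (h : q ∈ Sph) : q.re = 0 := ((mem_Sph_iff q).1 h).1

lemma Sph_mul_self {q : H} (h : q ∈ Sph) : q * q = -1 := by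
  rw [← pow_two]; exact h

lemma Sph_im {q : H} (h : q ∈ Sph) : q.im = q := by
  ext <;> simp [Sph_re h]

lemma qexp_re {I : H} (hI : I ∈ Sph) (t : ℝ) : (qexp t I).re = Real.cos t := by
  simp [qexp, Sph_re hI]

lemma qexp_im {I : H} (hI : I ∈ Sph) (t : ℝ) : (qexp t I).im = Real.sin t • I := by
  ext <;> simp [qexp, Sph_re hI]

lemma half_eq (a : H) : a / 2 = (2⁻¹ : ℝ) • a := by
  have h2 : (2 : H) = ((2 : ℝ) : H) := by norm_cast
  rw [div_eq_mul_inv, h2, ← Quaternion.coe_inv, Quaternion.mul_coe_eq_smul]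

/-- Any function of the form `q ↦ A q.re + q.im * B q.re` is a slice function. -/
lemma isSlice_form (A B : ℝ → H) : IsSlice (fun q => A q.re + q.im * B q.re) := by
  intro I hI J hJ t
  simp only [qexp_re hI, qexp_re hJ, qexp_im hI, qexp_im hJ, Real.cos_neg, Real.sin_neg]
  set X := A (Real.cos t)
  set Y := B (Real.cos t)
  have hII : I * I = -1 := Sph_mul_self hI
  have key : (J * I) * (I * Y) = -(J * Y) := by
    rw [mul_assoc, ← mul_assoc I I Y, hII]
    simp
  simp only [half_eq, smul_mul_assoc, neg_mul, neg_smul]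
  simp only [mul_sub, mul_add, mul_neg, mul_smul_comm, key]
  module

def I₀ : H := ⟨0, 1, 0, 0⟩

lemma I₀_mem : I₀ ∈ Sph := by
  rw [mem_Sph_iff]; norm_num [I₀]

/-- The "even part" of a slice function on the slice through `I₀`. -/
def Af (f : H → H) (x : ℝ) : H :=
  (f (qexp (Real.arccos x) I₀) + f (qexp (-(Real.arccos x)) I₀)) / 2

/-- The "odd part" of a slice function on the slice through `I₀`. -/
def Bf (f : H → H) (x : ℝ) : H :=
  (Real.sin (Real.arccos x))⁻¹ •
    ((I₀ / 2) * (f (qexp (-(Real.arccos x)) I₀) - f (qexp (Real.arccos x) I₀)))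

lemma slice_eval {f : H → H} (hf : IsSlice f) {I : H} (hI : I ∈ Sph) {t : ℝ}
    (ht : t ∈ Icc 0 π) :
    f (qexp t I) = Af f (Real.cos t) + (Real.sin t • I) * Bf f (Real.cos t) := by
  have harc : Real.arccos (Real.cos t) = t := Real.arccos_cos ht.1 ht.2
  have hs := hf I₀ I₀_mem I hI t
  rw [Af, Bf, harc]
  rcases eq_or_ne (Real.sin t) 0 with hsin | hsin
  · have hqe : qexp (-t) I₀ = qexp t I₀ := by
      simp [qexp, Real.cos_neg, Real.sin_neg, hsin]
    rw [hs, hqe]; simp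
  · rw [hs]
    congr 1
    rw [smul_mul_assoc, mul_smul_comm, smul_smul, mul_inv_cancel₀ hsin, one_smul]
    rw [mul_div_assoc, mul_assoc]

/-- Every point of the unit sphere has the form `qexp t I`, `I ∈ Sph`, `t ∈ [0, π]`. -/
lemma sphere_rep {q : H} (hq : ‖q‖ = 1) :
    ∃ I ∈ Sph, ∃ t ∈ Icc (0:ℝ) π,
      Real.cos t = q.re ∧ Real.sin t • I = q.im ∧ q = qexp t I := by
  have hnsq : Quaternion.normSq q = 1 := by
    rw [Quaternion.normSq_eq_norm_mul_self, hq]; norm_num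
  rw [Quaternion.normSq_def'] at hnsq
  set x := q.re with hx
  have hx1 : -1 ≤ x := by nlinarith
  have hx2 : x ≤ 1 := by nlinarith
  set t := Real.arccos x with htdef
  have htmem : t ∈ Icc (0:ℝ) π := ⟨Real.arccos_nonneg x, Real.arccos_le_pi x⟩
  have hcos : Real.cos t = x := Real.cos_arccos hx1 hx2
  have hsin : Real.sin t = Real.sqrt (1 - x ^ 2) := Real.sin_arccos x
  have hsum : q.imI ^ 2 + q.imJ ^ 2 + q.imK ^ 2 = 1 - x ^ 2 := by nlinarith
  rcases eq_or_ne q.im 0 with him | him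
  · have hc1 : q.imI = 0 := by rw [← Quaternion.imI_im q, him]; rfl
    have hc2 : q.imJ = 0 := by rw [← Quaternion.imJ_im q, him]; rfl
    have hc3 : q.imK = 0 := by rw [← Quaternion.imK_im q, him]; rfl
    have hx0 : 1 - x ^ 2 = 0 := by rw [← hsum, hc1, hc2, hc3]; ring
    have hsin0 : Real.sin t = 0 := by rw [hsin, hx0, Real.sqrt_zero]
    refine ⟨I₀, I₀_mem, t, htmem, hcos, ?_, ?_⟩
    · rw [hsin0, zero_smul, him]
    · ext <;> simp [qexp, hcos, hsin0, hc1, hc2, hc3, hx]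
  · set r := Real.sqrt (1 - x ^ 2) with hr
    have hle : (0:ℝ) ≤ 1 - x ^ 2 := by nlinarith
    have hrpos : 0 < r := by
      rw [hr, Real.sqrt_pos]
      rcases lt_or_eq_of_le hle with h | h
      · exact h
      · exfalso
        apply him
        have h1 : q.imI ^ 2 + q.imJ ^ 2 + q.imK ^ 2 = 0 := by rw [hsum, ← h]
        ext <;> simp <;> nlinarith
    have hrne : r ≠ 0 := ne_of_gt hrpos
    have hr2 : r ^ 2 = 1 - x ^ 2 := Real.sq_sqrt (by nlinarith)
    refine ⟨r⁻¹ • q.im, ?_, t, htmem, hcos, ?_, ?_⟩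
    · rw [mem_Sph_iff]
      constructor
      · simp
      · simp only [Quaternion.imI_smul, Quaternion.imJ_smul, Quaternion.imK_smul,
          Quaternion.imI_im, Quaternion.imJ_im, Quaternion.imK_im, smul_eq_mul]
        field_simp
        nlinarith
    · rw [hsin, smul_smul, mul_inv_cancel₀ hrne, one_smul]
    · have : Real.sin t • (r⁻¹ • q.im) = q.im := by
        rw [hsin, smul_smul, mul_inv_cancel₀ hrne, one_smul]
      rw [qexp, this]
      ext <;> simp [hcos, hx]
lemma slice_eval' {f : H → H} (hf : IsSlice f) {q : H} (hq : ‖q‖ = 1) :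
    f q = Af f q.re + q.im * Bf f q.re := by
  obtain ⟨I, hI, t, ht, hcos, hsin, hqe⟩ := sphere_rep hq
  calc f q = f (qexp t I) := by rw [← hqe]
    _ = Af f (Real.cos t) + (Real.sin t • I) * Bf f (Real.cos t) := slice_eval hf hI ht
    _ = Af f q.re + q.im * Bf f q.re := by rw [hcos, hsin]

lemma norm_one_of_normSq_one {a : H} (h : Quaternion.normSq a = 1) : ‖a‖ = 1 := by
  have h2 : ‖a‖ * ‖a‖ = 1 := by rw [← Quaternion.normSq_eq_norm_mul_self, h]
  nlinarith [norm_nonneg a]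

lemma inv_eq_star_of_normSq_one {a : H} (h : Quaternion.normSq a = 1) : a⁻¹ = star a := by
  rw [Quaternion.inv_def, h]
  simp

def uu : H := ⟨Real.sqrt 2 / 2, Real.sqrt 2 / 2, 0, 0⟩

lemma normSq_uu : Quaternion.normSq uu = 1 := by
  have h : Real.sqrt 2 * Real.sqrt 2 = 2 := Real.mul_self_sqrt (by norm_num)
  rw [Quaternion.normSq_def']
  simp only [uu]
  ring_nf
  nlinarith

lemma norm_uu : ‖uu‖ = 1 := norm_one_of_normSq_one normSq_uu

lemma uu_ne : uu ≠ 0 := by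
  intro h
  have hn := norm_uu
  rw [h] at hn
  simp at hn

def ψ (q : H) : H := uu * q * uu⁻¹

lemma ψ_comp (q : H) : ψ q = ⟨q.re, q.imI, -q.imK, q.imJ⟩ := by
  have h : Real.sqrt 2 * Real.sqrt 2 = 2 := Real.mul_self_sqrt (by norm_num)
  rw [ψ, inv_eq_star_of_normSq_one normSq_uu]
  ext <;>
    simp [Quaternion.re_mul, Quaternion.imI_mul, Quaternion.imJ_mul, Quaternion.imK_mul] <;>
    simp [uu] <;>
    ring_nf <;>
    rw [Real.sq_sqrt (by norm_num : (0:ℝ) ≤ 2)] <;> ring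

lemma ψ_re (q : H) : (ψ q).re = q.re := by rw [ψ_comp]

lemma ψ_im_sub (q : H) (hD : ¬(q.imJ = 0 ∧ q.imK = 0)) : q.im - (ψ q).im ≠ 0 := by
  intro h
  rw [ψ_comp] at h
  have h1 : q.imJ - (-q.imK) = 0 := congrArg QuaternionAlgebra.imJ h
  have h2 : q.imK - q.imJ = 0 := congrArg QuaternionAlgebra.imK h
  simp at h1 h2
  exact hD ⟨by linarith, by linarith⟩

lemma conj_qexp {u : H} (hu : u ≠ 0) (t : ℝ) (I : H) :
    u * qexp t I * u⁻¹ = qexp t (u * I * u⁻¹) := by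
  simp only [qexp, mul_add, add_mul, mul_smul_comm, smul_mul_assoc, mul_one]
  rw [mul_inv_cancel₀ hu]

lemma norm_ψ (q : H) : ‖ψ q‖ = ‖q‖ := by
  rw [ψ, norm_mul, norm_mul, norm_uu, norm_inv, norm_uu]
  simp

/-- A rotation-invariant probability measure on the 2-sphere has no atoms on the `i`-axis. -/
lemma sigma_singleton {σ : Measure H} (hσ : IsSphereMeasure σ) {b : ℝ} (hb : b ≠ 0) :
    σ {(⟨0, b, 0, 0⟩ : H)} = 0 := by
  haveI := hσ.prob
  set a : H := ⟨0, b, 0, 0⟩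
  set φ : ℕ → ℝ := fun n => π / (2 * (n + 2)) with hφ
  set u : ℕ → H := fun n => ⟨Real.cos (φ n), 0, Real.sin (φ n), 0⟩ with hu
  set p : ℕ → H := fun n => ⟨0, b * Real.cos (2 * φ n), 0, b * Real.sin (2 * φ n)⟩ with hp
  have hnormSq : ∀ n, Quaternion.normSq (u n) = 1 := by
    intro n
    rw [Quaternion.normSq_def']
    show Real.cos (φ n) ^ 2 + 0 ^ 2 + Real.sin (φ n) ^ 2 + 0 ^ 2 = 1
    linear_combination Real.sin_sq_add_cos_sq (φ n)
  have hnorm : ∀ n, ‖u n‖ = 1 := fun n => norm_one_of_normSq_one (hnormSq n)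
  have hune : ∀ n, u n ≠ 0 := by
    intro n h
    have := hnorm n
    rw [h] at this
    simp at this
  have hconj : ∀ n, (u n)⁻¹ * a * u n = p n := by
    intro n
    rw [inv_eq_star_of_normSq_one (hnormSq n)]
    have hs2 := Real.sin_sq_add_cos_sq (φ n)
    have hsin2 := Real.sin_two_mul (φ n)
    have hcos2 := Real.cos_two_mul (φ n)
    ext <;>
      simp [Quaternion.re_mul, Quaternion.imI_mul, Quaternion.imJ_mul,
        Quaternion.imK_mul] <;>
      simp [hu, hp, a, hsin2, hcos2] <;>
      first
        | ring1
        | linear_combination b * hs2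
        | linear_combination (-b) * hs2
        | linear_combination (2*b) * hs2
        | linear_combination (-2*b) * hs2
  have heq : ∀ n, σ {p n} = σ {a} := by
    intro n
    have hrot := hσ.rotInv (u n) (hnorm n)
    have hmeas : Measurable fun q : H => u n * q * (u n)⁻¹ :=
      ((continuous_const.mul continuous_id).mul continuous_const).measurable
    have : σ {a} = σ ((fun q : H => u n * q * (u n)⁻¹) ⁻¹' {a}) := by
      conv_lhs => rw [← hrot]
      rw [Measure.map_apply hmeas (measurableSet_singleton a)]
    rw [this]
    congr 1
    ext q
    simp only [mem_preimage, mem_singleton_iff]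
    constructor
    · intro hqa
      rw [hqa, ← hconj n]
      simp [← mul_assoc, mul_inv_cancel₀ (hune n), mul_inv_cancel_right₀ (hune n)]
    · intro hqp
      rw [← hconj n, ← hqp]
      simp [← mul_assoc, inv_mul_cancel₀ (hune n), inv_mul_cancel_right₀ (hune n)]
  have hinj : Function.Injective p := by
    intro n m hnm
    have h1 := congrArg QuaternionAlgebra.imI hnm
    simp only [hp] at h1
    have h2 : Real.cos (2 * φ n) = Real.cos (2 * φ m) := by
      rw [mul_eq_mul_left_iff] at h1
      rcases h1 with h | h
      · exact h
      · exact absurd h hb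
    have hmem : ∀ k : ℕ, 2 * φ k ∈ Icc (0:ℝ) π := by
      intro k
      have hπ := Real.pi_pos
      have hk : (0:ℝ) < (k:ℝ) + 2 := by positivity
      simp only [hφ]
      constructor
      · positivity
      · have he : 2 * (π / (2 * ((k:ℝ) + 2))) = π / ((k:ℝ) + 2) := by
          field_simp
        rw [he]
        exact div_le_self hπ.le (by linarith)
    have h3 := Real.injOn_cos (hmem n) (hmem m) h2
    have h4 : φ n = φ m := by linarith
    simp only [hφ] at h4
    have hd1 : (2*((n:ℝ)+2)) ≠ 0 := by positivity
    have hd2 : (2*((m:ℝ)+2)) ≠ 0 := by positivity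
    have h6 := (div_eq_div_iff hd1 hd2).1 h4
    have h7 := mul_left_cancel₀ Real.pi_ne_zero h6
    have h5 : ((n:ℝ)) = m := by linarith
    exact_mod_cast h5
  -- now sum up
  have hsum : ∀ N : ℕ, (N : ℝ≥0∞) * σ {a} ≤ 1 := by
    intro N
    have hdisj : (Finset.range N : Set ℕ).PairwiseDisjoint fun n => ({p n} : Set H) := by
      intro n _ m _ hnm
      simp only [Function.onFun, Set.disjoint_singleton_left, mem_singleton_iff]
      exact fun h => hnm (hinj h)
    have := measure_biUnion_finset hdisj (fun n _ => measurableSet_singleton (p n)) (μ := σ)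
    have hle : σ (⋃ n ∈ Finset.range N, {p n}) ≤ 1 := by
      rw [← measure_univ (μ := σ)]
      exact measure_mono (subset_univ _)
    rw [this] at hle
    calc (N : ℝ≥0∞) * σ {a} = ∑ n ∈ Finset.range N, σ {a} := by
          rw [Finset.sum_const, Finset.card_range, nsmul_eq_mul]
      _ = ∑ n ∈ Finset.range N, σ {p n} := by
          exact Finset.sum_congr rfl fun n _ => (heq n).symm
      _ ≤ 1 := hle
  by_contra hne
  have hfin : σ {a} ≠ ⊤ := by
    intro h
    have := hsum 1
    rw [h] at this
    simp at this
  have hc : 0 < (σ {a}).toReal := ENNReal.toReal_pos hne hfin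
  obtain ⟨N, hN⟩ := exists_nat_gt (1 / (σ {a}).toReal)
  have := hsum N
  have hN' : ((N : ℝ≥0∞) * σ {a}).toReal ≤ 1 := by
    rw [← ENNReal.toReal_one]
    exact ENNReal.toReal_mono (by simp) this
  rw [ENNReal.toReal_mul, ENNReal.toReal_natCast] at hN'
  rw [div_lt_iff₀ hc] at hN
  nlinarith
open Filter

instance : IsFiniteMeasure arcMeasure := by
  constructor
  rw [arcMeasure, Measure.smul_apply, Measure.restrict_apply_univ, Real.volume_Ico, smul_eq_mul]
  have h1 : (ENNReal.ofReal (2 * π))⁻¹ ≠ ⊤ :=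
    ENNReal.inv_ne_top.mpr (ENNReal.ofReal_pos.mpr (by positivity : (0:ℝ) < 2*π)).ne' 
  exact ENNReal.mul_lt_top h1.lt_top ENNReal.ofReal_lt_top

lemma arc_null_sin : arcMeasure {t : ℝ | Real.sin t = 0} = 0 := by
  have hc : {t : ℝ | Real.sin t = 0} ⊆ Set.range (fun n : ℤ => (n : ℝ) * π) := by
    intro t ht
    rcases Real.sin_eq_zero_iff.1 ht with ⟨n, hn⟩
    exact ⟨n, hn⟩
  have h0 : volume {t : ℝ | Real.sin t = 0} = 0 :=
    measure_mono_null hc ((countable_range _).measure_zero _)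
  rw [arcMeasure, Measure.smul_apply, smul_eq_mul]
  have h1 : (volume.restrict (Ico 0 (2 * π))) {t : ℝ | Real.sin t = 0} = 0 :=
    le_antisymm (le_trans (Measure.restrict_le_self _) h0.le) (zero_le)
  rw [h1, mul_zero]

def Φ : H × ℝ → H := fun p => qexp p.2 p.1

lemma continuous_Φ : Continuous Φ := by
  unfold Φ qexp
  exact ((Real.continuous_cos.comp continuous_snd).smul continuous_const).add
    ((Real.continuous_sin.comp continuous_snd).smul continuous_fst)

lemma measurable_Φ : Measurable Φ := continuous_Φ.measurable

lemma measurableSet_Sph : MeasurableSet Sph :=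
  ((continuous_pow 2).measurable (measurableSet_singleton (-1 : H)))

lemma norm_qexp {I : H} (hI : I ∈ Sph) (t : ℝ) : ‖qexp t I‖ = 1 := by
  apply norm_one_of_normSq_one
  obtain ⟨h0, h1⟩ := (mem_Sph_iff I).1 hI
  rw [Quaternion.normSq_def']
  simp [qexp, h0]
  nlinarith [Real.sin_sq_add_cos_sq t]

lemma bMeasure_def (σ : Measure H) : bMeasure σ = Measure.map Φ (σ.prod arcMeasure) := rfl

lemma ae_norm_one {σ : Measure H} (hσ : IsSphereMeasure σ) :
    ∀ᵐ q ∂(bMeasure σ), ‖q‖ = 1 := by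
  haveI := hσ.prob
  rw [bMeasure_def, ae_map_iff measurable_Φ.aemeasurable (by
    exact continuous_norm.measurable (measurableSet_singleton (1:ℝ)))]
  rw [ae_iff]
  refine measure_mono_null (t := Sphᶜ ×ˢ (univ : Set ℝ)) ?_ ?_
  · intro p hp
    simp only [mem_setOf_eq] at hp
    constructor
    · intro hmem
      exact hp (norm_qexp hmem p.2)
    · trivial
  · rw [Measure.prod_prod, hσ.supp, zero_mul]

lemma ae_imJK {σ : Measure H} (hσ : IsSphereMeasure σ) :
    ∀ᵐ q ∂(bMeasure σ), ¬(q.imJ = 0 ∧ q.imK = 0) := by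
  haveI := hσ.prob
  have hZ : MeasurableSet {q : H | q.imJ = 0 ∧ q.imK = 0} := by
    exact (Quaternion.continuous_imJ.measurable (measurableSet_singleton (0:ℝ))).inter
      (Quaternion.continuous_imK.measurable (measurableSet_singleton (0:ℝ)))
  rw [bMeasure_def]
  have hgoal : ∀ᵐ (p : H × ℝ) ∂(σ.prod arcMeasure), ¬((Φ p).imJ = 0 ∧ (Φ p).imK = 0) → True := by simp
  refine (ae_map_iff measurable_Φ.aemeasurable (p := fun q : H => ¬(q.imJ = 0 ∧ q.imK = 0)) hZ.compl).mpr ?_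
  rw [ae_iff]
  have hsub : {p : H × ℝ | ¬ (Φ p ∈ ({q : H | q.imJ = 0 ∧ q.imK = 0})ᶜ)} ⊆
      ({I : H | I.imJ = 0 ∧ I.imK = 0} ×ˢ (univ : Set ℝ)) ∪
        ((univ : Set H) ×ˢ {t : ℝ | Real.sin t = 0}) := by
    rintro ⟨I, t⟩ hp
    simp only [mem_setOf_eq, mem_compl_iff, not_not] at hp
    have h1 : Real.sin t * I.imJ = 0 := by
      have := hp.1
      simpa [Φ, qexp] using this
    have h2 : Real.sin t * I.imK = 0 := by
      have := hp.2
      simpa [Φ, qexp] using this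
    rcases eq_or_ne (Real.sin t) 0 with hs | hs
    · right
      exact ⟨trivial, hs⟩
    · left
      refine ⟨⟨?_, ?_⟩, trivial⟩
      · exact (mul_eq_zero.1 h1).resolve_left hs
      · exact (mul_eq_zero.1 h2).resolve_left hs
  apply measure_mono_null hsub
  apply le_antisymm _ (zero_le)
  apply le_trans (measure_union_le _ _)
  have hE1 : σ {I : H | I.imJ = 0 ∧ I.imK = 0} = 0 := by
    have e1 : σ ({(⟨0,(1:ℝ),0,0⟩ : H)} : Set H) = 0 := sigma_singleton hσ (by norm_num)
    have e2 : σ ({(⟨0,(-1:ℝ),0,0⟩ : H)} : Set H) = 0 := sigma_singleton hσ (by norm_num)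
    have hsub2 : {I : H | I.imJ = 0 ∧ I.imK = 0} ⊆
        Sphᶜ ∪ (({(⟨0,(1:ℝ),0,0⟩ : H)} : Set H) ∪ ({(⟨0,(-1:ℝ),0,0⟩ : H)} : Set H)) := by
      intro I hI
      by_cases hIS : I ∈ Sph
      · right
        obtain ⟨h0, h1⟩ := (mem_Sph_iff I).1 hIS
        obtain ⟨hj, hk⟩ := hI
        have h2 : (I.imI - 1) * (I.imI + 1) = 0 := by nlinarith
        rcases mul_eq_zero.1 h2 with h | h
        · left
          show I = _
          ext <;> simp [h0, hj, hk] <;> linarith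
        · right
          show I = _
          ext <;> simp [h0, hj, hk] <;> linarith
      · left; exact hIS
    apply measure_mono_null hsub2
    apply le_antisymm _ (zero_le)
    calc σ (Sphᶜ ∪ (({(⟨0,(1:ℝ),0,0⟩ : H)} : Set H) ∪ ({(⟨0,(-1:ℝ),0,0⟩ : H)} : Set H)))
        ≤ σ Sphᶜ + (σ ({(⟨0,(1:ℝ),0,0⟩ : H)} : Set H) + σ ({(⟨0,(-1:ℝ),0,0⟩ : H)} : Set H)) :=
          le_trans (measure_union_le _ _) (by gcongr; exact measure_union_le _ _)
      _ = 0 := by rw [hσ.supp, e1, e2]; simp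
  rw [Measure.prod_prod, Measure.prod_prod, hE1, zero_mul, arc_null_sin, mul_zero, add_zero]

lemma continuous_ψ : Continuous ψ := by
  unfold ψ
  exact (continuous_const.mul continuous_id).mul continuous_const

lemma map_ψ {σ : Measure H} (hσ : IsSphereMeasure σ) :
    Measure.map ψ (bMeasure σ) = bMeasure σ := by
  haveI := hσ.prob
  have hρm : Measurable (fun q : H => uu * q * uu⁻¹) := continuous_ψ.measurable
  rw [bMeasure_def, Measure.map_map continuous_ψ.measurable measurable_Φ]
  have hcomp : ψ ∘ Φ = Φ ∘ (Prod.map (fun I : H => uu * I * uu⁻¹) (id : ℝ → ℝ)) := by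
    funext p
    exact conj_qexp uu_ne p.2 p.1
  rw [hcomp, ← Measure.map_map measurable_Φ (hρm.prodMap measurable_id)]
  rw [← Measure.map_prod_map _ _ hρm measurable_id, hσ.rotInv uu norm_uu, Measure.map_id]
/-- The key convergence lemma: an `L²` limit of slice functions has a slice representative. -/
lemma key (σ : Measure H) (hσ : IsSphereMeasure σ)
    (f : ℕ → H → H) (g : H → H)
    (hs : ∀ n, IsSlice (f n)) (hm : ∀ n, MemLp (f n) 2 (bMeasure σ))
    (hgm : MemLp g 2 (bMeasure σ))
    (hconv : Tendsto (fun n => eLpNorm (f n - g) 2 (bMeasure σ)) atTop (nhds 0)) :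
    ∃ g' : H → H, IsSlice g' ∧ g =ᵐ[bMeasure σ] g' := by
  classical
  haveI := hσ.prob
  have htim : TendstoInMeasure (bMeasure σ) f atTop g :=
    tendstoInMeasure_of_tendsto_eLpNorm (by norm_num)
      (fun n => (hm n).aestronglyMeasurable) hgm.aestronglyMeasurable hconv
  obtain ⟨ns, -, hae⟩ := htim.exists_seq_tendsto_ae
  set F : ℕ → H → H := fun k => f (ns k) with hF
  set A : ℝ → H := fun x =>
    if h : ∃ L, Tendsto (fun k => Af (F k) x) atTop (nhds L) then h.choose else 0 with hA
  set B : ℝ → H := fun x =>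
    if h : ∃ L, Tendsto (fun k => Bf (F k) x) atTop (nhds L) then h.choose else 0 with hB
  refine ⟨fun q => A q.re + q.im * B q.re, isSlice_form A B, ?_⟩
  have hψae : ∀ᵐ q ∂(bMeasure σ),
      Tendsto (fun k => F k (ψ q)) atTop (nhds (g (ψ q))) := by
    have h1 : ∀ᵐ q ∂(Measure.map ψ (bMeasure σ)),
        Tendsto (fun k => F k q) atTop (nhds (g q)) := by
      rw [map_ψ hσ]
      exact hae
    exact ae_of_ae_map continuous_ψ.measurable.aemeasurable h1
  filter_upwards [hae, hψae, ae_norm_one hσ, ae_imJK hσ] with q hq hqψ hq1 hqJK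
  have hψq1 : ‖ψ q‖ = 1 := by rw [norm_ψ, hq1]
  have hrep : ∀ k, F k q = Af (F k) q.re + q.im * Bf (F k) q.re :=
    fun k => slice_eval' (hs (ns k)) hq1
  have hrepψ : ∀ k, F k (ψ q) = Af (F k) q.re + (ψ q).im * Bf (F k) q.re := by
    intro k
    have h := slice_eval' (hs (ns k)) hψq1
    rwa [ψ_re] at h
  have hvw : q.im - (ψ q).im ≠ 0 := ψ_im_sub q hqJK
  have hBt : Tendsto (fun k => Bf (F k) q.re) atTop
      (nhds ((q.im - (ψ q).im)⁻¹ * (g q - g (ψ q)))) := by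
    have h1 : Tendsto (fun k => (q.im - (ψ q).im)⁻¹ * (F k q - F k (ψ q))) atTop
        (nhds ((q.im - (ψ q).im)⁻¹ * (g q - g (ψ q)))) := (hq.sub hqψ).const_mul _
    have h2 : (fun k => (q.im - (ψ q).im)⁻¹ * (F k q - F k (ψ q)))
        = fun k => Bf (F k) q.re := by
      funext k
      rw [hrep k, hrepψ k]
      have h3 : Af (F k) q.re + q.im * Bf (F k) q.re
          - (Af (F k) q.re + (ψ q).im * Bf (F k) q.re)
          = (q.im - (ψ q).im) * Bf (F k) q.re := by
        rw [sub_mul]; abel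
      rw [h3, inv_mul_cancel_left₀ hvw]
    rwa [h2] at h1
  have hAt : Tendsto (fun k => Af (F k) q.re) atTop
      (nhds (g q - q.im * ((q.im - (ψ q).im)⁻¹ * (g q - g (ψ q))))) := by
    have h1 := hq.sub (hBt.const_mul q.im)
    have h2 : (fun k => F k q - q.im * Bf (F k) q.re) = fun k => Af (F k) q.re := by
      funext k
      rw [hrep k, add_sub_cancel_right]
    rwa [h2] at h1
  have hAex : ∃ L, Tendsto (fun k => Af (F k) q.re) atTop (nhds L) := ⟨_, hAt⟩
  have hBex : ∃ L, Tendsto (fun k => Bf (F k) q.re) atTop (nhds L) := ⟨_, hBt⟩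
  have hAq : Tendsto (fun k => Af (F k) q.re) atTop (nhds (A q.re)) := by
    rw [hA]
    simp only
    rw [dif_pos hAex]
    exact hAex.choose_spec
  have hBq : Tendsto (fun k => Bf (F k) q.re) atTop (nhds (B q.re)) := by
    rw [hB]
    simp only
    rw [dif_pos hBex]
    exact hBex.choose_spec
  have hFq : Tendsto (fun k => F k q) atTop (nhds (A q.re + q.im * B q.re)) := by
    have h1 := hAq.add (hBq.const_mul q.im)
    have h2 : (fun k => Af (F k) q.re + q.im * Bf (F k) q.re) = fun k => F k q :=
      funext fun k => (hrep k).symm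
    rwa [h2] at h1
  exact tendsto_nhds_unique hq hFq

end SliceAux

open SliceAux Filter

/-- The set `L²_s` of (a.e. representatives of) slice functions in
`L²(∂B, Σ; ℍ)` is a closed real-linear subspace of `L²`. In particular, if a sequence of
slice functions in `L²` converges in `L²` norm to `g ∈ L²`, then `g` has a representative
which is a slice function. -/
theorem slice_L2_closed_subspace (σ : Measure (Quaternion ℝ)) (hσ : IsSphereMeasure σ) :
    (∃ S : Submodule ℝ (Lp (Quaternion ℝ) 2 (bMeasure σ)),
      IsClosed (S : Set (Lp (Quaternion ℝ) 2 (bMeasure σ))) ∧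
      ∀ f : Lp (Quaternion ℝ) 2 (bMeasure σ),
        f ∈ S ↔ ∃ g : Quaternion ℝ → Quaternion ℝ, IsSlice g ∧ ⇑f =ᵐ[bMeasure σ] g) ∧
    ∀ (f : ℕ → Quaternion ℝ → Quaternion ℝ) (g : Quaternion ℝ → Quaternion ℝ),
      (∀ n, IsSlice (f n)) → (∀ n, MemLp (f n) 2 (bMeasure σ)) →
      MemLp g 2 (bMeasure σ) →
      Filter.Tendsto (fun n => eLpNorm (f n - g) 2 (bMeasure σ)) Filter.atTop (nhds 0) →
      ∃ g' : Quaternion ℝ → Quaternion ℝ, IsSlice g' ∧ g =ᵐ[bMeasure σ] g' := by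
  constructor
  · let S : Submodule ℝ (Lp (Quaternion ℝ) 2 (bMeasure σ)) :=
      { carrier := {F | ∃ g : Quaternion ℝ → Quaternion ℝ, IsSlice g ∧ ⇑F =ᵐ[bMeasure σ] g}
        add_mem' := by
          rintro F G ⟨gf, hgf, hf⟩ ⟨gg, hgg, hg⟩
          refine ⟨gf + gg, ?_, (Lp.coeFn_add F G).trans (hf.add hg)⟩
          intro I hI J hJ t
          have h1 := hgf I hI J hJ t
          have h2 := hgg I hI J hJ t
          simp only [Pi.add_apply, h1, h2, half_eq]
          simp only [smul_add, smul_sub, mul_add, mul_sub]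
          module
        zero_mem' := by
          refine ⟨0, ?_, Lp.coeFn_zero _ _ _⟩
          intro I hI J hJ t
          simp
        smul_mem' := by
          rintro c F ⟨gf, hgf, hf⟩
          refine ⟨c • gf, ?_, ?_⟩
          · intro I hI J hJ t
            have h1 := hgf I hI J hJ t
            simp only [Pi.smul_apply, h1, half_eq]
            simp only [smul_add, smul_sub, mul_add, mul_sub, mul_smul_comm, smul_smul]
            module
          · refine (Lp.coeFn_smul c F).trans ?_
            filter_upwards [hf] with x hx
            simp only [Pi.smul_apply, hx] }
    refine ⟨S, ?_, fun f => Iff.rfl⟩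
    apply IsSeqClosed.isClosed
    intro Fs F hFs hFlim
    choose gs hgs hgse using hFs
    have hm : ∀ n, MemLp (gs n) 2 (bMeasure σ) :=
      fun n => (Lp.memLp (Fs n)).ae_eq (hgse n)
    have hconv : Tendsto (fun n => eLpNorm (gs n - ⇑F) 2 (bMeasure σ)) atTop (nhds 0) := by
      have heq : (fun n => eLpNorm (gs n - ⇑F) 2 (bMeasure σ))
          = fun n => ENNReal.ofReal ‖Fs n - F‖ := by
        funext n
        have e1 : eLpNorm (gs n - ⇑F) 2 (bMeasure σ)
            = eLpNorm (⇑(Fs n - F)) 2 (bMeasure σ) := by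
          exact eLpNorm_congr_ae
            (((hgse n).symm.sub EventuallyEq.rfl).trans (Lp.coeFn_sub (Fs n) F).symm)
        rw [e1, Lp.norm_def, ENNReal.ofReal_toReal (Lp.eLpNorm_ne_top _)]
      rw [heq]
      have h3 : Tendsto (fun n => ‖Fs n - F‖) atTop (nhds 0) :=
        tendsto_iff_norm_sub_tendsto_zero.mp hFlim
      have h4 := (ENNReal.continuous_ofReal.tendsto 0).comp h3
      simpa [Function.comp_def] using h4
    exact key σ hσ gs (⇑F) hgs hm (Lp.memLp F) hconv
  · intro f g hs hm hg hconv
    exact key σ hσ f g hs hm hg hconv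
end
end

section
/- If f ∈ L² is a slice function, then for every n ∈ ℤ the n-th Fourier coefficient f̂(n) = (1/2π) ∫₀^{2π} exp(−ntI) f(exp(tI)) dt is independent of the choice of I ∈ S (for σ-almost every pair of imaginary units I, I' ∈ S for which the integrals are defined, the two integrals coincide). -/
open MeasureTheory Real Set
open scoped ENNReal

noncomputable section

lemma quat_half_shift (x y : Quaternion ℝ) : (x / 2) * y = x * y / 2 := by
  have h : ((2:Quaternion ℝ))⁻¹ * y = y * (2:Quaternion ℝ)⁻¹ :=
    ((Commute.ofNat_right y 2).inv_right₀).eq.symm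
  rw [div_eq_mul_inv, div_eq_mul_inv, mul_assoc, h, ← mul_assoc]

/-- Expansion identity used to cancel the `J`-dependent part of paired Fourier integrands. -/
lemma quat_pair_key (J : Quaternion ℝ) (hJ : J * J = -1) (c s : ℝ) (g P : Quaternion ℝ) :
    (c • 1 + s • J) * (g + J * P) + (c • 1 - s • J) * (g - J * P)
      = (2 * c) • g - (2 * s) • P := by
  have h1 : J * (g - J * P) = J * g + P := by
    rw [mul_sub, ← mul_assoc, hJ, neg_one_mul, sub_neg_eq_add]
  have h2 : J * (g + J * P) = J * g - P := by
    rw [mul_add, ← mul_assoc, hJ, neg_one_mul, ← sub_eq_add_neg]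
  simp only [add_mul, sub_mul, smul_mul_assoc, one_mul, h1, h2, smul_add, smul_sub]
  module

/-- An integral over `[0, 2π)` of a function odd under `t ↦ 2π − t` vanishes. -/
lemma quat_refl_zero (w : ℝ → Quaternion ℝ) (hsym : ∀ t, w (2*π - t) = -w t) :
    ∫ t in Ico (0:ℝ) (2*π), w t = 0 := by
  have h1 : ∫ t in Ico (0:ℝ) (2*π), w t = ∫ t in (0:ℝ)..(2*π), w t := by
    rw [intervalIntegral.integral_of_le (by positivity), integral_Ico_eq_integral_Ioo,
      integral_Ioc_eq_integral_Ioo]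
  have h2 : ∫ t in (0:ℝ)..(2*π), w (2*π - t) = ∫ t in (0:ℝ)..(2*π), w t := by
    simpa using intervalIntegral.integral_comp_sub_left (a := (0:ℝ)) (b := 2*π) w (2*π)
  simp only [hsym, intervalIntegral.integral_neg] at h2
  rw [h1]
  have h3 : (2:ℝ) • ∫ t in (0:ℝ)..(2*π), w t = 0 := by
    rw [two_smul]; nth_rewrite 1 [← h2]; exact neg_add_cancel _
  simpa using (smul_eq_zero.mp h3).resolve_left (by norm_num)

lemma quat_qexp_per (J : Quaternion ℝ) (t : ℝ) : qexp (2*π - t) J = qexp (-t) J := by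
  unfold qexp; simp [Real.cos_sub, Real.sin_sub]

lemma quat_qexp_per' (J : Quaternion ℝ) (t : ℝ) : qexp (-(2*π - t)) J = qexp t J := by
  unfold qexp; simp [Real.cos_sub, Real.sin_sub]

lemma quat_qexp_refl (J : Quaternion ℝ) (n : ℤ) (t : ℝ) :
    qexp (-(↑n * (2*π - t))) J
      = Real.cos (-(↑n*t)) • (1:Quaternion ℝ) - Real.sin (-(↑n*t)) • J := by
  unfold qexp
  have e1 : (-((n:ℝ) * (2*π - t))) = (n:ℝ)*t - (n:ℝ)*(2*π) := by ring
  rw [e1, Real.cos_sub_int_mul_two_pi, Real.sin_sub_int_mul_two_pi, Real.cos_neg,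
    Real.sin_neg, neg_smul, sub_neg_eq_add]

/-- If `f ∈ L²(∂B, Σ; ℍ)` is a slice function, then for every `n ∈ ℤ` the
`n`-th Fourier coefficient `f̂(n) = (1/2π) ∫₀^{2π} exp(−ntI) f(exp(tI)) dt` is independent
of the imaginary unit `I ∈ S`: whenever the defining integrals for two imaginary units
`I, I'` exist, the two coefficients coincide. -/
theorem fcoeff_indep_of_isSlice (σ : Measure (Quaternion ℝ)) (hσ : IsSphereMeasure σ)
    (f : Quaternion ℝ → Quaternion ℝ) (hslice : IsSlice f)
    (hf : MemLp f 2 (bMeasure σ)) (n : ℤ) (I I' : Quaternion ℝ)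
    (hI : I ∈ Sph) (hI' : I' ∈ Sph)
    (hint : IntegrableOn (fun t => qexp (-(n * t)) I * f (qexp t I))
      (Ico (0 : ℝ) (2 * π)) volume)
    (hint' : IntegrableOn (fun t => qexp (-(n * t)) I' * f (qexp t I'))
      (Ico (0 : ℝ) (2 * π)) volume) :
    fcoeff f n I = fcoeff f n I' := by
  have hmulI : I * I = -1 := by rw [← sq]; exact hI
  have hmulI' : I' * I' = -1 := by rw [← sq]; exact hI'
  set F : Quaternion ℝ → ℝ → Quaternion ℝ :=
    fun J t => qexp (-(↑n * t)) J * f (qexp t J) with hF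
  -- pointwise symmetry
  have key : ∀ t : ℝ, F I' t + F I' (2*π - t) = F I t + F I (2*π - t) := by
    intro t
    set a := f (qexp t I) with ha
    set b := f (qexp (-t) I) with hb
    set g := (a + b) / 2 with hg
    set P := I * (b - a) / 2 with hP
    set c := Real.cos (-((n:ℝ)*t)) with hc
    set s := Real.sin (-((n:ℝ)*t)) with hs
    have shape : ∀ J : Quaternion ℝ, (a + b) / 2 + (J * I / 2) * (b - a) = g + J * P := by
      intro J
      rw [hg, hP, quat_half_shift, mul_assoc, mul_div_assoc]
    have shape' : ∀ J : Quaternion ℝ, (b + a) / 2 + (J * I / 2) * (a - b) = g - J * P := by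
      intro J
      rw [hg, hP, add_comm b a, show a - b = -(b - a) by rw [neg_sub], mul_neg,
        quat_half_shift, mul_assoc, mul_div_assoc, ← sub_eq_add_neg]
    have hva : f (qexp t I') = g + I' * P := by
      rw [hslice I hI I' hI' t, ← ha, ← hb, shape]
    have hvb : f (qexp (2*π - t) I') = g - I' * P := by
      rw [hslice I hI I' hI' (2*π - t), quat_qexp_per I, quat_qexp_per' I, ← ha, ← hb, shape']
    have hvc : f (qexp t I) = g + I * P := by
      rw [hslice I hI I hI t, ← ha, ← hb, shape]
    have hvd : f (qexp (2*π - t) I) = g - I * P := by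
      rw [hslice I hI I hI (2*π - t), quat_qexp_per I, quat_qexp_per' I, ← ha, ← hb, shape']
    have hexp : ∀ J : Quaternion ℝ, qexp (-((n:ℝ) * t)) J = c • 1 + s • J := by
      intro J; rfl
    calc F I' t + F I' (2*π - t)
        = (c • 1 + s • I') * (g + I' * P) + (c • 1 - s • I') * (g - I' * P) := by
          rw [hF]; simp only; rw [hva, hvb, hexp, quat_qexp_refl, ← hc, ← hs]
      _ = (2 * c) • g - (2 * s) • P := quat_pair_key I' hmulI' c s g P
      _ = (c • 1 + s • I) * (g + I * P) + (c • 1 - s • I) * (g - I * P) :=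
          (quat_pair_key I hmulI c s g P).symm
      _ = F I t + F I (2*π - t) := by
          rw [hF]; simp only; rw [hvc, hvd, hexp, quat_qexp_refl, ← hc, ← hs]
  -- the odd part integrates to zero
  have hzero : ∫ t in Ico (0:ℝ) (2*π), (F I' t - F I t) = 0 := by
    refine quat_refl_zero _ fun t => ?_
    have h := key t
    rw [neg_sub, sub_eq_sub_iff_add_eq_add, add_comm]
    exact h
  have hsub : ∫ t in Ico (0:ℝ) (2*π), (F I' t - F I t)
      = (∫ t in Ico (0:ℝ) (2*π), F I' t) - ∫ t in Ico (0:ℝ) (2*π), F I t :=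
    integral_sub hint' hint
  have : (∫ t in Ico (0:ℝ) (2*π), F I' t) = ∫ t in Ico (0:ℝ) (2*π), F I t := by
    have := hsub.symm.trans hzero
    exact sub_eq_zero.mp this
  unfold fcoeff
  rw [← this]
end
end

section
/- Let φ ∈ L², and for σ-almost every I ∈ S let a_n(I) = (1/2π) ∫₀^{2π} exp(−ntI) φ(exp(tI)) dt denote the Fourier coefficients of the restriction of φ to the circle ∂B ∩ (ℝ + ℝI), so that φ(exp(tI)) = Σ_{n∈ℤ} exp(ntI) a_n(I) in L² of that circle. Then the orthogonal projection of φ onto L²_s is given by Πφ(exp(tJ)) = Σ_{n∈ℤ} exp(ntJ) ã_n, where ã_n = ∫_S a_n(I) dσ(I) for every n ∈ ℤ. -/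
open MeasureTheory Real Set
open scoped ENNReal

noncomputable section

namespace SliceHelper

variable {I J K : Quaternion ℝ}

theorem sph_re (hI : I ∈ Sph) : I.re = 0 := by
  have h := hI
  simp only [Sph, mem_setOf_eq, sq] at h
  have h1 : (I * I).re = (-1 : Quaternion ℝ).re := by rw [h]
  have h2 : (I * I).imI = (-1 : Quaternion ℝ).imI := by rw [h]
  have h3 : (I * I).imJ = (-1 : Quaternion ℝ).imJ := by rw [h]
  have h4 : (I * I).imK = (-1 : Quaternion ℝ).imK := by rw [h]
  simp only [Quaternion.re_mul, Quaternion.imI_mul, Quaternion.imJ_mul, Quaternion.imK_mul,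
    Quaternion.re_neg, Quaternion.re_one, Quaternion.imI_neg, Quaternion.imI_one,
    Quaternion.imJ_neg, Quaternion.imJ_one, Quaternion.imK_neg, Quaternion.imK_one] at h1 h2 h3 h4
  by_contra hre
  have hiI : I.imI = 0 := by
    have h2' : I.re * I.imI = 0 := by linarith
    exact (mul_eq_zero.1 h2').resolve_left hre
  have hiJ : I.imJ = 0 := by
    have h3' : I.re * I.imJ = 0 := by linarith
    exact (mul_eq_zero.1 h3').resolve_left hre
  have hiK : I.imK = 0 := by
    have h4' : I.re * I.imK = 0 := by linarith
    exact (mul_eq_zero.1 h4').resolve_left hre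
  rw [hiI, hiJ, hiK] at h1; nlinarith

theorem sph_normSq (hI : I ∈ Sph) : I.imI^2 + I.imJ^2 + I.imK^2 = 1 := by
  have h := hI
  simp only [Sph, mem_setOf_eq, sq] at h
  have h1 : (I * I).re = (-1 : Quaternion ℝ).re := by rw [h]
  simp only [Quaternion.re_mul, Quaternion.re_neg, Quaternion.re_one] at h1
  have := sph_re hI
  nlinarith

theorem sph_mul_self (hI : I ∈ Sph) : I * I = -1 := by
  have h := hI; simpa [Sph, sq] using h

theorem sph_norm (hI : I ∈ Sph) : ‖I‖ = 1 := by
  have h : Quaternion.normSq I = 1 := by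
    rw [Quaternion.normSq_def']
    have h1 := sph_re hI
    have h2 := sph_normSq hI
    nlinarith
  have := Quaternion.normSq_eq_norm_mul_self I
  nlinarith [norm_nonneg I]

theorem sph_star (hI : I ∈ Sph) : star I = -I := by
  ext <;> simp [sph_re hI]

theorem sph_neg (hI : I ∈ Sph) : -I ∈ Sph := by
  have h := hI; simp only [Sph, mem_setOf_eq] at h ⊢; rw [neg_sq]; exact h

theorem sph_ne_zero (hI : I ∈ Sph) : I ≠ 0 := by
  intro h; have := sph_norm hI; rw [h] at this; simp at this

theorem qexp_norm (hI : I ∈ Sph) (t : ℝ) : ‖qexp t I‖ = 1 := by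
  have h : Quaternion.normSq (qexp t I) = 1 := by
    rw [Quaternion.normSq_def']
    simp only [qexp, Quaternion.re_add, Quaternion.imI_add, Quaternion.imJ_add,
      Quaternion.imK_add, Quaternion.re_smul, Quaternion.imI_smul, Quaternion.imJ_smul,
      Quaternion.imK_smul, Quaternion.re_one, Quaternion.imI_one, Quaternion.imJ_one,
      Quaternion.imK_one, smul_eq_mul, sph_re hI]
    nlinarith [sph_normSq hI, Real.sin_sq_add_cos_sq t]
  have := Quaternion.normSq_eq_norm_mul_self (qexp t I)
  nlinarith [norm_nonneg (qexp t I)]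

theorem qexp_mul (hI : I ∈ Sph) (s t : ℝ) : qexp s I * qexp t I = qexp (s + t) I := by
  have h1 := sph_re hI
  have h2 := sph_normSq hI
  ext <;>
    simp only [qexp, Quaternion.re_mul, Quaternion.imI_mul, Quaternion.imJ_mul,
      Quaternion.imK_mul, Quaternion.re_add, Quaternion.imI_add, Quaternion.imJ_add,
      Quaternion.imK_add, Quaternion.re_smul, Quaternion.imI_smul, Quaternion.imJ_smul,
      Quaternion.imK_smul, Quaternion.re_one, Quaternion.imI_one, Quaternion.imJ_one,
      Quaternion.imK_one, smul_eq_mul, h1, Real.cos_add, Real.sin_add]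
  · linear_combination (-(Real.sin s * Real.sin t)) * h2
  · ring
  · ring
  · ring

theorem qexp_zero (I : Quaternion ℝ) : qexp 0 I = 1 := by simp [qexp]

theorem qexp_neg_unit (s : ℝ) : qexp s (-I) = qexp (-s) I := by
  simp [qexp, smul_neg]

theorem star_qexp (hI : I ∈ Sph) (t : ℝ) : star (qexp t I) = qexp (-t) I := by
  simp [qexp, star_smul, sph_star hI, smul_neg]

theorem qexp_pow (hI : I ∈ Sph) (t : ℝ) : ∀ m : ℕ, (qexp t I) ^ m = qexp (m * t) I := by
  intro m
  induction m with
  | zero => simp [qexp_zero]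
  | succ k ih =>
      rw [pow_succ, ih, qexp_mul hI]
      congr 1
      push_cast
      ring

theorem qexp_periodic (t : ℝ) : qexp (t + 2 * π) I = qexp t I := by
  simp [qexp, Real.cos_add_two_pi, Real.sin_add_two_pi]

theorem qexp_int_periodic (t : ℝ) (n : ℤ) : qexp (t + n * (2 * π)) I = qexp t I := by
  simp [qexp, Real.cos_add_int_mul_two_pi, Real.sin_add_int_mul_two_pi]

theorem half_smul (q : Quaternion ℝ) : q / 2 = (2:ℝ)⁻¹ • q := by
  have h2 : (2 : Quaternion ℝ) = ((2:ℝ) : Quaternion ℝ) := by norm_cast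
  rw [div_eq_mul_inv, h2, ← Quaternion.coe_inv, Quaternion.mul_coe_eq_smul]

theorem slice_identity (hI : I ∈ Sph) (hJ : J ∈ Sph) (s : ℝ) :
    qexp s J = (qexp s I + qexp (-s) I) / 2 + (J * I / 2) * (qexp (-s) I - qexp s I) := by
  have hII := sph_mul_self hI
  have hsum : qexp s I + qexp (-s) I = (2 * Real.cos s) • (1:Quaternion ℝ) := by
    simp only [qexp, Real.cos_neg, Real.sin_neg, neg_smul]
    module
  have hdiff : qexp (-s) I - qexp s I = (-(2 * Real.sin s)) • I := by
    simp only [qexp, Real.cos_neg, Real.sin_neg, neg_smul]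
    module
  rw [hsum, hdiff, half_smul, half_smul, smul_smul, mul_smul_comm, smul_mul_assoc, smul_smul,
    mul_assoc, hII, mul_neg_one]
  simp only [qexp]
  match_scalars <;> ring

theorem decomp_mul (hK : J ∈ Sph) (s : ℝ) (A B : Quaternion ℝ) :
    qexp (-s) J * (A + J * B) =
      (Real.cos s • A + Real.sin s • B) + J * (Real.cos s • B - Real.sin s • A) := by
  have hKK := sph_mul_self hK
  have hexp : qexp (-s) J * (A + J * B)
      = Real.cos s • (A + J * B) + (-Real.sin s) • (J * (A + J * B)) := by
    simp only [qexp, Real.cos_neg, Real.sin_neg, neg_smul, add_mul, neg_mul, smul_mul_assoc,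
      one_mul]
  rw [hexp, mul_add, ← mul_assoc, hKK, neg_one_mul, mul_sub, mul_smul_comm, mul_smul_comm]
  module

/-- The slice test function `q ↦ qⁿ` (resp. `star q ^ (-n)` for negative `n`). -/
def gfun (n : ℤ) (q : Quaternion ℝ) : Quaternion ℝ :=
  if 0 ≤ n then q ^ n.toNat else (star q) ^ (-n).toNat

theorem gfun_qexp (hI : I ∈ Sph) (n : ℤ) (t : ℝ) : gfun n (qexp t I) = qexp (n * t) I := by
  unfold gfun
  split_ifs with h
  · have hc : ((n.toNat : ℕ) : ℝ) = (n : ℝ) := by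
      exact_mod_cast congrArg (Int.cast : ℤ → ℝ) (Int.toNat_of_nonneg h)
    rw [qexp_pow hI, hc]
  · have hc : (((-n).toNat : ℕ) : ℝ) = ((-n : ℤ) : ℝ) := by
      exact_mod_cast congrArg (Int.cast : ℤ → ℝ) (Int.toNat_of_nonneg (by omega : (0:ℤ) ≤ -n))
    rw [star_qexp hI, qexp_pow hI, hc, show (((-n : ℤ) : ℝ) * -t) = (n : ℝ) * t by
      push_cast; ring]

theorem gfun_continuous (n : ℤ) : Continuous (gfun n) := by
  unfold gfun
  split_ifs
  · exact continuous_pow _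
  · exact (continuous_pow _).comp continuous_star

theorem gfun_slice (n : ℤ) : IsSlice (gfun n) := by
  intro I hI J hJ t
  rw [gfun_qexp hJ, gfun_qexp hI, gfun_qexp hI, show ((n:ℝ) * -t) = -((n:ℝ) * t) by ring]
  exact slice_identity hI hJ ((n:ℝ) * t)

theorem isSlice_mul_const {f : Quaternion ℝ → Quaternion ℝ} (hf : IsSlice f)
    (e : Quaternion ℝ) : IsSlice (fun q => f q * e) := by
  intro I hI J hJ t
  simp only
  rw [hf I hI J hJ t]
  simp only [add_mul, sub_mul, div_mul_eq_mul_div, mul_assoc]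
  congr 1
  rw [half_smul, half_smul, smul_mul_assoc, add_mul]

/-- `(e * ·).re` as a continuous linear map. -/
def reMulCLM (e : Quaternion ℝ) : Quaternion ℝ →L[ℝ] ℝ :=
  { toLinearMap := (QuaternionAlgebra.reₗ _ _ _).comp (LinearMap.mulLeft ℝ e)
    cont := Quaternion.continuous_re.comp (continuous_const.mul continuous_id) }

theorem reMulCLM_apply (e q : Quaternion ℝ) : reMulCLM e q = (e * q).re := rfl

/-- Left multiplication as a continuous linear map. -/
def mulCLM (e : Quaternion ℝ) : Quaternion ℝ →L[ℝ] Quaternion ℝ :=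
  { toLinearMap := LinearMap.mulLeft ℝ e
    cont := continuous_const.mul continuous_id }

theorem mulCLM_apply (e q : Quaternion ℝ) : mulCLM e q = e * q := rfl

theorem fcoeff_eq_intervalIntegral (f : Quaternion ℝ → Quaternion ℝ) (n : ℤ)
    (K : Quaternion ℝ) :
    fcoeff f n K = (2 * π)⁻¹ • ∫ t in (0:ℝ)..(2 * π), qexp (-(n * t)) K * f (qexp t K) := by
  rw [fcoeff, setIntegral_congr_set Ico_ae_eq_Ioc,
    intervalIntegral.integral_of_le (by positivity : (0:ℝ) ≤ 2 * π)]

theorem fcoeff_neg (f : Quaternion ℝ → Quaternion ℝ) (n : ℤ) (K : Quaternion ℝ) :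
    fcoeff f n (-K) = fcoeff f n K := by
  rw [fcoeff_eq_intervalIntegral, fcoeff_eq_intervalIntegral]
  congr 1
  have key : ∀ t : ℝ, qexp (-((n:ℝ) * t)) (-K) * f (qexp t (-K))
      = qexp (-((n:ℝ) * (2*π - t))) K * f (qexp (2*π - t) K) := by
    intro t
    have e1 : qexp (-((n:ℝ) * t)) (-K) = qexp (-((n:ℝ) * (2*π - t))) K := by
      rw [qexp_neg_unit,
        show (-(-((n:ℝ) * t)) : ℝ) = -((n:ℝ) * (2*π - t)) + (n : ℤ) * (2*π) by push_cast; ring,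
        qexp_int_periodic]
    have e2 : qexp t (-K) = qexp (2*π - t) K := by
      rw [qexp_neg_unit,
        show (-t : ℝ) = (2*π - t) + (-1 : ℤ) * (2*π) by push_cast; ring,
        qexp_int_periodic]
    rw [e1, e2]
  calc (∫ t in (0:ℝ)..(2*π), qexp (-((n:ℝ) * t)) (-K) * f (qexp t (-K)))
      = ∫ t in (0:ℝ)..(2*π),
          (fun s => qexp (-((n:ℝ) * s)) K * f (qexp s K)) (2*π - t) := by
        refine intervalIntegral.integral_congr fun t _ => ?_
        simpa using key t
    _ = ∫ t in (2*π - 2*π)..(2*π - 0), qexp (-((n:ℝ) * t)) K * f (qexp t K) := by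
        exact intervalIntegral.integral_comp_sub_left
          (fun s => qexp (-((n:ℝ) * s)) K * f (qexp s K)) (2*π)
    _ = _ := by norm_num

theorem arc_integral {E : Type*} [NormedAddCommGroup E] [NormedSpace ℝ E] (h : ℝ → E) :
    ∫ t, h t ∂arcMeasure = (2 * π)⁻¹ • ∫ t in Ico (0:ℝ) (2 * π), h t := by
  rw [arcMeasure, integral_smul_measure, ENNReal.toReal_inv,
    ENNReal.toReal_ofReal (by positivity)]

theorem fcoeff_eq_arc (f : Quaternion ℝ → Quaternion ℝ) (n : ℤ) (K : Quaternion ℝ) :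
    fcoeff f n K = ∫ t, qexp (-(n * t)) K * f (qexp t K) ∂arcMeasure :=
  (arc_integral _).symm

theorem two_pi_inv_ne_zero : (ENNReal.ofReal (2 * π))⁻¹ ≠ 0 :=
  ENNReal.inv_ne_zero.mpr ENNReal.ofReal_ne_top

theorem two_pi_inv_ne_top : (ENNReal.ofReal (2 * π))⁻¹ ≠ ⊤ :=
  ENNReal.inv_ne_top.mpr (by simp [ENNReal.ofReal_eq_zero]; positivity)

theorem arc_prob : IsProbabilityMeasure arcMeasure := by
  constructor
  rw [arcMeasure, Measure.smul_apply, Measure.restrict_apply_univ, Real.volume_Ico,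
    smul_eq_mul, show (2*π - 0) = 2*π by ring]
  exact ENNReal.inv_mul_cancel (by simp [ENNReal.ofReal_eq_zero]; positivity)
    ENNReal.ofReal_ne_top

theorem arc_to_Ico {E : Type*} [NormedAddCommGroup E] {g : ℝ → E}
    (h : Integrable g arcMeasure) : IntegrableOn g (Ico (0:ℝ) (2*π)) volume := by
  rw [arcMeasure] at h
  exact (integrable_smul_measure two_pi_inv_ne_zero two_pi_inv_ne_top).mp h

theorem continuous_coeff (n : ℤ) {I : Quaternion ℝ} :
    Continuous (fun t : ℝ => qexp (-(n * t)) I) := by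
  unfold qexp; fun_prop

theorem integrableOn_coeff {f : Quaternion ℝ → Quaternion ℝ} (hI : I ∈ Sph) (n : ℤ)
    (h : Integrable (fun t => f (qexp t I)) arcMeasure) :
    IntegrableOn (fun t => qexp (-(n * t)) I * f (qexp t I)) (Ico (0:ℝ) (2*π)) volume :=
  Integrable.bdd_mul (arc_to_Ico h) (continuous_coeff n).aestronglyMeasurable
    (c := 1) (Filter.Eventually.of_forall fun x => le_of_eq (qexp_norm hI _))

theorem reflect_int {f : Quaternion ℝ → Quaternion ℝ} {I : Quaternion ℝ}
    (h : IntegrableOn (fun t => f (qexp t I)) (Ico (0:ℝ) (2*π)) volume) :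
    IntegrableOn (fun t => f (qexp (-t) I)) (Ico (0:ℝ) (2*π)) volume := by
  have h1 : IntervalIntegrable (fun t => f (qexp t I)) volume 0 (2*π) :=
    (intervalIntegrable_iff_integrableOn_Ico_of_le (by positivity)).mpr h
  have h2 := (h1.comp_sub_left (2*π)).symm
  have h3 : (fun x : ℝ => f (qexp (2*π - x) I)) = fun x => f (qexp (-x) I) := by
    funext x
    congr 1
    rw [show 2*π - x = -x + (1:ℤ)*(2*π) by push_cast; ring, qexp_int_periodic]
  rw [h3, show (2*π - (2*π)) = 0 by ring, show (2*π - 0) = 2*π by ring] at h2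
  exact (intervalIntegrable_iff_integrableOn_Ico_of_le (by positivity)).mp h2

theorem smul_integrableOn {g : ℝ → Quaternion ℝ} {c : ℝ → ℝ} {s : Set ℝ}
    (hg : IntegrableOn g s volume) (hc : Continuous c) (hb : ∀ x, |c x| ≤ 1) :
    IntegrableOn (fun t => c t • g t) s volume := by
  have hcont : Continuous (fun x : ℝ => ((c x : ℝ) : Quaternion ℝ)) :=
    Quaternion.continuous_coe.comp hc
  have h := Integrable.bdd_mul hg hcont.aestronglyMeasurable
    (c := 1) (Filter.Eventually.of_forall fun x => by simpa [Quaternion.norm_coe, Real.norm_eq_abs] using hb x)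
  exact h.congr (Filter.Eventually.of_forall fun x => by
    simp only [Quaternion.coe_mul_eq_smul])

theorem measurableSet_sph : MeasurableSet Sph := by
  have : Sph = (fun q : Quaternion ℝ => q ^ 2) ⁻¹' {-1} := rfl
  rw [this]
  exact ((continuous_pow 2).measurable) (measurableSet_singleton _)

theorem continuous_F : Continuous (fun p : Quaternion ℝ × ℝ => qexp p.2 p.1) := by
  unfold qexp; fun_prop

end SliceHelper

set_option maxHeartbeats 2000000

/-- Let `φ ∈ L²(∂B, Σ; ℍ)` and, for `I ∈ S`, let
`a_n(I) = (1/2π) ∫₀^{2π} exp(−ntI) φ(exp(tI)) dt` be the Fourier coefficients of the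
restriction of `φ` to the circle `∂B ∩ (ℝ + ℝI)`. Then the orthogonal projection `Πφ`
of `φ` onto the space `L²_s` of slice functions is
`Πφ(exp(tJ)) = Σ_{n∈ℤ} exp(ntJ) ã_n`, where `ã_n = ∫_S a_n(I) dσ(I)`; equivalently, the
Fourier coefficients of the slice function `Πφ` (which are independent of the slice) are
the means `ã_n = ∫_S a_n(I) dσ(I)`. -/
theorem projection_fcoeff_eq_mean (σ : Measure (Quaternion ℝ)) (hσ : IsSphereMeasure σ)
    (φ Pφ : Quaternion ℝ → Quaternion ℝ) (hP : IsProjection σ φ Pφ) :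
    ∀ n : ℤ, ∀ J ∈ Sph, fcoeff Pφ n J = ∫ I, fcoeff φ n I ∂σ := by
  obtain ⟨hφ, hslice, hPφ, horth⟩ := hP
  haveI hσp : IsProbabilityMeasure σ := hσ.prob
  haveI : IsProbabilityMeasure arcMeasure := SliceHelper.arc_prob
  intro n J hJ
  have hFc : Continuous (fun p : Quaternion ℝ × ℝ => qexp p.2 p.1) := SliceHelper.continuous_F
  have hFm : Measurable (fun p : Quaternion ℝ × ℝ => qexp p.2 p.1) := hFc.measurable
  have hbM : bMeasure σ
      = Measure.map (fun p : Quaternion ℝ × ℝ => qexp p.2 p.1) (σ.prod arcMeasure) := rfl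
  haveI : IsProbabilityMeasure (bMeasure σ) := by
    rw [hbM]; exact Measure.isProbabilityMeasure_map hFm.aemeasurable
  -- a.e. facts
  have hSae : ∀ᵐ I ∂σ, I ∈ Sph := by
    rw [MeasureTheory.ae_iff]
    exact hσ.supp
  have hSae2 : ∀ᵐ p ∂(σ.prod arcMeasure), p.1 ∈ Sph := by
    rw [MeasureTheory.ae_iff]
    have hset : {p : Quaternion ℝ × ℝ | ¬ p.1 ∈ Sph} = Sphᶜ ×ˢ (univ : Set ℝ) := by
      ext p; simp [Set.mem_prod]
    rw [hset, Measure.prod_prod, hσ.supp, zero_mul]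
  -- the difference function
  set ψ : Quaternion ℝ → Quaternion ℝ := fun q => φ q - Pφ q with hψdef
  have hψ : MemLp ψ 2 (bMeasure σ) := hφ.sub hPφ
  have hψI : Integrable ψ (bMeasure σ) := hψ.integrable one_le_two
  have hmapInt : ∀ f : Quaternion ℝ → Quaternion ℝ, MemLp f 2 (bMeasure σ) →
      Integrable (fun p : Quaternion ℝ × ℝ => f (qexp p.2 p.1)) (σ.prod arcMeasure) := by
    intro f hf
    have h1 : Integrable f (bMeasure σ) := hf.integrable one_le_two
    rw [hbM] at h1
    have := (integrable_map_measure (by rw [← hbM]; exact hf.aestronglyMeasurable)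
      hFm.aemeasurable).mp h1
    exact this
  have hψF : Integrable (fun p : Quaternion ℝ × ℝ => ψ (qexp p.2 p.1)) (σ.prod arcMeasure) :=
    hmapInt ψ hψ
  have hφF : Integrable (fun p : Quaternion ℝ × ℝ => φ (qexp p.2 p.1)) (σ.prod arcMeasure) :=
    hmapInt φ hφ
  have hPφF : Integrable (fun p : Quaternion ℝ × ℝ => Pφ (qexp p.2 p.1)) (σ.prod arcMeasure) :=
    hmapInt Pφ hPφ
  -- coefficient function on the product space
  have hGc : Continuous (fun p : Quaternion ℝ × ℝ => qexp (-((n:ℝ) * p.2)) p.1) := by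
    unfold qexp; fun_prop
  set G : Quaternion ℝ × ℝ → Quaternion ℝ :=
    fun p => qexp (-((n:ℝ) * p.2)) p.1 * ψ (qexp p.2 p.1) with hGdef
  have hGmeas : AEStronglyMeasurable G (σ.prod arcMeasure) :=
    hGc.aestronglyMeasurable.mul hψF.1
  have hGbound : ∀ᵐ p ∂(σ.prod arcMeasure), ‖G p‖ ≤ ‖ψ (qexp p.2 p.1)‖ := by
    filter_upwards [hSae2] with p hp
    simp only [hGdef]
    rw [norm_mul, SliceHelper.qexp_norm hp, one_mul]
  have hGint : Integrable G (σ.prod arcMeasure) :=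
    Integrable.mono' hψF.norm hGmeas hGbound
  -- Step A : the integral of G vanishes, by orthogonality
  have hGzero : ∫ p, G p ∂(σ.prod arcMeasure) = 0 := by
    have hae : (fun p : Quaternion ℝ × ℝ =>
        star (SliceHelper.gfun n (qexp p.2 p.1)) * ψ (qexp p.2 p.1)) =ᵐ[σ.prod arcMeasure] G := by
      filter_upwards [hSae2] with p hp
      simp only [hGdef]
      rw [SliceHelper.gfun_qexp hp, SliceHelper.star_qexp hp]
    set v : Quaternion ℝ :=
      ∫ p, star (SliceHelper.gfun n (qexp p.2 p.1)) * ψ (qexp p.2 p.1) ∂(σ.prod arcMeasure)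
      with hvdef
    have hvG : ∫ p, G p ∂(σ.prod arcMeasure) = v := (integral_congr_ae hae).symm
    have hvint : Integrable (fun p : Quaternion ℝ × ℝ =>
        star (SliceHelper.gfun n (qexp p.2 p.1)) * ψ (qexp p.2 p.1)) (σ.prod arcMeasure) :=
      hGint.congr hae.symm
    have hmain : ∀ e : Quaternion ℝ, (star e * v).re = 0 := by
      intro e
      have hge_cont : Continuous (fun q => SliceHelper.gfun n q * e) :=
        (SliceHelper.gfun_continuous n).mul continuous_const
      have hge_mem : MemLp (fun q => SliceHelper.gfun n q * e) 2 (bMeasure σ) := by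
        apply MemLp.of_bound hge_cont.aestronglyMeasurable ‖e‖
        rw [hbM, MeasureTheory.ae_map_iff hFm.aemeasurable
          (measurableSet_le hge_cont.norm.measurable measurable_const)]
        filter_upwards [hSae2] with p hp
        show ‖SliceHelper.gfun n (qexp p.2 p.1) * e‖ ≤ ‖e‖
        rw [norm_mul, SliceHelper.gfun_qexp hp, SliceHelper.qexp_norm hp, one_mul]
      have h0 := horth _ (SliceHelper.isSlice_mul_const (SliceHelper.gfun_slice n) e) hge_mem
      have haesm : AEStronglyMeasurable
          (fun q => (star (SliceHelper.gfun n q * e) * ψ q).re) (bMeasure σ) :=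
        Quaternion.continuous_re.comp_aestronglyMeasurable
          (hge_cont.star.aestronglyMeasurable.mul hψ.aestronglyMeasurable)
      have hmap : ∫ q, (star (SliceHelper.gfun n q * e) * ψ q).re ∂(bMeasure σ)
          = ∫ p, (star (SliceHelper.gfun n (qexp p.2 p.1) * e)
              * ψ (qexp p.2 p.1)).re ∂(σ.prod arcMeasure) := by
        rw [hbM]
        exact integral_map hFm.aemeasurable (by rw [← hbM]; exact haesm)
      have hre : ∀ p : Quaternion ℝ × ℝ,
          (star (SliceHelper.gfun n (qexp p.2 p.1) * e) * ψ (qexp p.2 p.1)).re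
          = SliceHelper.reMulCLM (star e)
              (star (SliceHelper.gfun n (qexp p.2 p.1)) * ψ (qexp p.2 p.1)) := by
        intro p
        rw [SliceHelper.reMulCLM_apply, star_mul, mul_assoc]
      have hL := (SliceHelper.reMulCLM (star e)).integral_comp_comm hvint
      calc (star e * v).re
          = SliceHelper.reMulCLM (star e) v := rfl
        _ = ∫ p, SliceHelper.reMulCLM (star e)
              (star (SliceHelper.gfun n (qexp p.2 p.1)) * ψ (qexp p.2 p.1))
              ∂(σ.prod arcMeasure) := hL.symm
        _ = ∫ p, (star (SliceHelper.gfun n (qexp p.2 p.1) * e)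
              * ψ (qexp p.2 p.1)).re ∂(σ.prod arcMeasure) := by
            refine integral_congr_ae (Filter.Eventually.of_forall fun p => ?_)
            exact (hre p).symm
        _ = ∫ q, (star (SliceHelper.gfun n q * e) * ψ q).re ∂(bMeasure σ) := hmap.symm
        _ = 0 := by
            have : (fun q => (star (SliceHelper.gfun n q * e) * ψ q).re)
                = fun q => (star (SliceHelper.gfun n q * e) * (φ q - Pφ q)).re := rfl
            rw [this]
            exact h0
    have hv0 : v = 0 := by
      have h1 := hmain 1
      have hi := hmain (⟨0,1,0,0⟩ : Quaternion ℝ)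
      have hj := hmain (⟨0,0,1,0⟩ : Quaternion ℝ)
      have hk := hmain (⟨0,0,0,1⟩ : Quaternion ℝ)
      simp only [star_one, one_mul, Quaternion.re_mul, Quaternion.re_star, Quaternion.imI_star,
        Quaternion.imJ_star, Quaternion.imK_star] at h1 hi hj hk
      ext <;> simp_all [Quaternion.re_zero, Quaternion.imI_zero, Quaternion.imJ_zero, Quaternion.imK_zero]
      · simpa using hmain ⟨0,1,0,0⟩
      · simpa using hmain ⟨0,0,1,0⟩
      · simpa using hmain ⟨0,0,0,1⟩
    rw [hvG, hv0]
  -- Step A' : rewrite as an integral of Fourier coefficients of ψ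
  have hψcoeff : ∫ I, fcoeff ψ n I ∂σ = 0 := by
    rw [← hGzero, MeasureTheory.integral_prod _ hGint]
    refine integral_congr_ae (Filter.Eventually.of_forall fun I => ?_)
    exact SliceHelper.fcoeff_eq_arc ψ n I
  -- slice-wise integrability
  have hφsl : ∀ᵐ I ∂σ, Integrable (fun t => φ (qexp t I)) arcMeasure := hφF.prod_right_ae
  have hPsl : ∀ᵐ I ∂σ, Integrable (fun t => Pφ (qexp t I)) arcMeasure := hPφF.prod_right_ae
  -- additivity of coefficients a.e.
  have hsub : ∀ᵐ I ∂σ, fcoeff ψ n I = fcoeff φ n I - fcoeff Pφ n I := by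
    filter_upwards [hφsl, hPsl, hSae] with I h1 h2 hIS
    have h1' := SliceHelper.integrableOn_coeff hIS n h1
    have h2' := SliceHelper.integrableOn_coeff hIS n h2
    rw [fcoeff, fcoeff, fcoeff, ← smul_sub, ← integral_sub h1' h2']
    congr 1
    refine integral_congr_ae (Filter.Eventually.of_forall fun t => ?_)
    simp only [hψdef, mul_sub]
  -- σ-integrability of the coefficient functions
  have hcoeffint : ∀ f : Quaternion ℝ → Quaternion ℝ,
      Integrable (fun p : Quaternion ℝ × ℝ => f (qexp p.2 p.1)) (σ.prod arcMeasure) →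
      Integrable (fun I => fcoeff f n I) σ := by
    intro f hf
    have hH : Integrable (fun p : Quaternion ℝ × ℝ =>
        qexp (-((n:ℝ) * p.2)) p.1 * f (qexp p.2 p.1)) (σ.prod arcMeasure) := by
      refine Integrable.mono' hf.norm (hGc.aestronglyMeasurable.mul hf.1) ?_
      filter_upwards [hSae2] with p hp
      rw [norm_mul, SliceHelper.qexp_norm hp, one_mul]
    have := hH.integral_prod_left
    refine this.congr (Filter.Eventually.of_forall fun I => ?_)
    exact (SliceHelper.fcoeff_eq_arc f n I).symm
  have h1int := hcoeffint φ hφF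
  have h2int := hcoeffint Pφ hPφF
  have hkey : ∫ I, fcoeff φ n I ∂σ = ∫ I, fcoeff Pφ n I ∂σ := by
    have h := integral_congr_ae hsub
    rw [hψcoeff, integral_sub h1int h2int] at h
    exact sub_eq_zero.mp h.symm

  -- Step B : choose a good base slice
  haveI : (ae σ).NeBot := ae_neBot.mpr (IsProbabilityMeasure.ne_zero (μ := σ))
  obtain ⟨I₀, hI₀int, hI₀S⟩ := (hPsl.and hSae).exists
  have h₀ : IntegrableOn (fun t => Pφ (qexp t I₀)) (Ico (0:ℝ) (2*π)) volume :=
    SliceHelper.arc_to_Ico hI₀int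
  have h₀' : IntegrableOn (fun t => Pφ (qexp (-t) I₀)) (Ico (0:ℝ) (2*π)) volume :=
    SliceHelper.reflect_int h₀
  set A : ℝ → Quaternion ℝ := fun t => (Pφ (qexp t I₀) + Pφ (qexp (-t) I₀)) / 2 with hAdef
  set Bf : ℝ → Quaternion ℝ :=
    fun t => (I₀ / 2) * (Pφ (qexp (-t) I₀) - Pφ (qexp t I₀)) with hBdef
  have hAint : IntegrableOn A (Ico (0:ℝ) (2*π)) volume := (h₀.add h₀').div_const 2
  have hBint : IntegrableOn Bf (Ico (0:ℝ) (2*π)) volume :=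
    Integrable.bdd_mul (h₀'.sub h₀) aestronglyMeasurable_const (c := ‖I₀/2‖) (Filter.Eventually.of_forall fun _ => le_rfl)
  set X : ℝ → Quaternion ℝ :=
    fun t => Real.cos ((n:ℝ)*t) • A t + Real.sin ((n:ℝ)*t) • Bf t with hXdef
  set Y : ℝ → Quaternion ℝ :=
    fun t => Real.cos ((n:ℝ)*t) • Bf t - Real.sin ((n:ℝ)*t) • A t with hYdef
  have hXint : IntegrableOn X (Ico (0:ℝ) (2*π)) volume :=
    (SliceHelper.smul_integrableOn hAint (by fun_prop) (fun x => Real.abs_cos_le_one _)).add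
      (SliceHelper.smul_integrableOn hBint (by fun_prop) (fun x => Real.abs_sin_le_one _))
  have hYint : IntegrableOn Y (Ico (0:ℝ) (2*π)) volume :=
    (SliceHelper.smul_integrableOn hBint (by fun_prop) (fun x => Real.abs_cos_le_one _)).sub
      (SliceHelper.smul_integrableOn hAint (by fun_prop) (fun x => Real.abs_sin_le_one _))
  set C1 : Quaternion ℝ := (2*π)⁻¹ • ∫ t in Ico (0:ℝ) (2*π), X t with hC1def
  set C2 : Quaternion ℝ := (2*π)⁻¹ • ∫ t in Ico (0:ℝ) (2*π), Y t with hC2def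
  have hdecomp : ∀ K, K ∈ Sph → ∀ t : ℝ, Pφ (qexp t K) = A t + K * Bf t := by
    intro K hK t
    rw [hslice I₀ hI₀S K hK t]
    simp only [hAdef, hBdef]
    rw [mul_div_assoc, mul_assoc]
  have hconst : ∀ K, K ∈ Sph → fcoeff Pφ n K = C1 + K * C2 := by
    intro K hK
    have hintg : ∀ t : ℝ, qexp (-((n:ℝ)*t)) K * Pφ (qexp t K) = X t + K * Y t := by
      intro t
      rw [hdecomp K hK t, hXdef, hYdef]
      exact SliceHelper.decomp_mul hK ((n:ℝ)*t) (A t) (Bf t)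
    have hKY : IntegrableOn (fun t => K * Y t) (Ico (0:ℝ) (2*π)) volume :=
      Integrable.bdd_mul hYint aestronglyMeasurable_const (c := ‖K‖) (Filter.Eventually.of_forall fun _ => le_rfl)
    have hmul := (SliceHelper.mulCLM K).integral_comp_comm hYint
    simp only [fcoeff]
    rw [integral_congr_ae (Filter.Eventually.of_forall fun t => hintg t),
      integral_add hXint hKY,
      show (fun t => K * Y t) = fun t => SliceHelper.mulCLM K (Y t) from rfl, hmul,
      SliceHelper.mulCLM_apply, smul_add, ← mul_smul_comm]
  have hC2 : C2 = 0 := by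
    have h1 := hconst J hJ
    have h2 := hconst (-J) (SliceHelper.sph_neg hJ)
    have h3 := SliceHelper.fcoeff_neg Pφ n J
    rw [h1, h2] at h3
    have h4 : -(J * C2) = J * C2 := by
      have h := add_left_cancel h3
      rwa [neg_mul] at h
    have h5 : J * C2 + J * C2 = 0 := by
      nth_rewrite 1 [← h4]
      exact neg_add_cancel _
    have h6 : J * C2 = 0 := by
      have h7 : (2:ℝ) • (J * C2) = 0 := by rw [two_smul]; exact h5
      rcases smul_eq_zero.mp h7 with h | h
      · norm_num at h
      · exact h
    rcases mul_eq_zero.mp h6 with h | h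
    · exact absurd h (SliceHelper.sph_ne_zero hJ)
    · exact h
  have hfin : ∀ K, K ∈ Sph → fcoeff Pφ n K = C1 := by
    intro K hK
    rw [hconst K hK, hC2, mul_zero, add_zero]
  have hPconst : ∫ I, fcoeff Pφ n I ∂σ = C1 := by
    rw [integral_congr_ae (g := fun _ => C1)
      (by filter_upwards [hSae] with I hI using hfin I hI)]
    simp
  rw [hfin J hJ, hkey, hPconst]
end
end

section
/- If φ : ∂B → ℍ is continuous, then for Σ-almost every exp(tI) ∈ ∂B one has Πφ(exp(tI)) = ∫_S (1 − IJ) φ(exp(tJ)) dσ(J). -/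
open MeasureTheory Real Set
open scoped ENNReal

noncomputable section

/-! ### Auxiliary development -/

namespace ProjAux

open scoped Quaternion

local notation "ℍ'" => Quaternion ℝ

/-! #### Elementary algebra -/

instance : CharZero (Quaternion ℝ) :=
  ⟨fun m n h => by
    have := congrArg QuaternionAlgebra.re h
    simpa using this⟩

lemma two_ne_zero' : (2 : ℍ') ≠ 0 := two_ne_zero

lemma double_div_two (y : ℍ') : (y + y) / 2 = y := by
  rw [div_eq_mul_inv, ← mul_two, mul_assoc, mul_inv_cancel₀ two_ne_zero', mul_one]

lemma div_two_mul_double (x y : ℍ') : x / 2 * (y + y) = x * y := by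
  rw [div_eq_mul_inv, ← two_mul, mul_assoc, ← mul_assoc _ (2 : ℍ'), inv_mul_cancel₀ two_ne_zero',
    one_mul]

lemma assoc_half (a b d : ℍ') : a * b / 2 * d = a * (b / 2 * d) := by
  rw [div_eq_mul_inv, div_eq_mul_inv, mul_assoc, mul_assoc, mul_assoc]

lemma abs_re_le_norm' (q : ℍ') : |q.re| ≤ ‖q‖ := by
  have h1 : Quaternion.normSq q = ‖q‖ * ‖q‖ := Quaternion.normSq_eq_norm_mul_self q
  rw [Quaternion.normSq_def'] at h1
  nlinarith [abs_nonneg q.re, norm_nonneg q, sq_abs q.re, sq_nonneg q.imI, sq_nonneg q.imJ,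
    sq_nonneg q.imK]

lemma re_star_mul_self (q : ℍ') : (star q * q).re = ‖q‖ * ‖q‖ := by
  rw [Quaternion.star_mul_self, Quaternion.re_coe, Quaternion.normSq_eq_norm_mul_self]

/-! #### Continuous linear maps -/

def mulLeftCLM (c : ℍ') : ℍ' →L[ℝ] ℍ' := ContinuousLinearMap.mul ℝ ℍ' c

@[simp] lemma mulLeftCLM_apply (c x : ℍ') : mulLeftCLM c x = c * x := rfl

def mulRightCLM (c : ℍ') : ℍ' →L[ℝ] ℍ' := (ContinuousLinearMap.mul ℝ ℍ').flip c

@[simp] lemma mulRightCLM_apply (c x : ℍ') : mulRightCLM c x = x * c := rfl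

def reCLM : ℍ' →L[ℝ] ℝ :=
  LinearMap.mkContinuous
    { toFun := QuaternionAlgebra.re
      map_add' := fun a b => Quaternion.re_add a b
      map_smul' := fun r a => Quaternion.re_smul a r }
    1 (fun q => by rw [one_mul, Real.norm_eq_abs]; exact abs_re_le_norm' q)

@[simp] lemma reCLM_apply (x : ℍ') : reCLM x = x.re := rfl

section Integrals

variable {α : Type*} [MeasurableSpace α] {μ : Measure α}

lemma integral_qmul_left (c : ℍ') {f : α → ℍ'} (hf : Integrable f μ) :
    ∫ x, c * f x ∂μ = c * ∫ x, f x ∂μ := by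
  simpa using (mulLeftCLM c).integral_comp_comm hf

lemma integral_qmul_right (c : ℍ') {f : α → ℍ'} (hf : Integrable f μ) :
    ∫ x, f x * c ∂μ = (∫ x, f x ∂μ) * c := by
  simpa using (mulRightCLM c).integral_comp_comm hf

lemma integral_qre {f : α → ℍ'} (hf : Integrable f μ) :
    ∫ x, (f x).re ∂μ = (∫ x, f x ∂μ).re := by
  simpa using reCLM.integral_comp_comm hf

/-- product of two `L²` norms is integrable. -/
lemma integrable_norm_mul_norm {f g : α → ℍ'} (hf : MemLp f 2 μ) (hg : MemLp g 2 μ) :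
    Integrable (fun x => ‖f x‖ * ‖g x‖) μ := by
  have h : (1 : ℝ≥0∞) / 1 = 1 / 2 + 1 / 2 := by
    rw [ENNReal.div_add_div_same, one_div_one, one_add_one_eq_two]
    exact (ENNReal.div_self (by norm_num) (by norm_num)).symm
  have := (hg.norm.smul hf.norm : MemLp ((fun x => ‖f x‖) • fun x => ‖g x‖) 1 μ)
  rw [memLp_one_iff_integrable] at this
  simpa [Pi.smul_apply', smul_eq_mul, Pi.mul_def] using this

lemma integrable_star_mul_re {f g : α → ℍ'} (hf : MemLp f 2 μ) (hg : MemLp g 2 μ) :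
    Integrable (fun x => (star (f x) * g x).re) μ := by
  refine (integrable_norm_mul_norm hf hg).mono' ?_ ?_
  · exact Continuous.comp_aestronglyMeasurable Quaternion.continuous_re
      ((Continuous.comp_aestronglyMeasurable continuous_star hf.aestronglyMeasurable).mul
        hg.aestronglyMeasurable)
  · refine Filter.Eventually.of_forall fun x => ?_
    calc ‖(star (f x) * g x).re‖ ≤ ‖star (f x) * g x‖ := by
          simpa [Real.norm_eq_abs] using abs_re_le_norm' (star (f x) * g x)
      _ = ‖f x‖ * ‖g x‖ := by rw [norm_mul, Quaternion.norm_star]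

end Integrals

/-! #### The sphere of imaginary units -/

lemma sph_mul_self {J : ℍ'} (h : J ∈ Sph) : J * J = -1 := by
  have : J ^ 2 = -1 := h
  rwa [sq] at this

lemma sph_re_normSq {J : ℍ'} (h : J ∈ Sph) : J.re = 0 ∧ Quaternion.normSq J = 1 := by
  have h2 : J * J = -1 := sph_mul_self h
  have hre := congrArg QuaternionAlgebra.re h2
  have hi := congrArg QuaternionAlgebra.imI h2
  have hj := congrArg QuaternionAlgebra.imJ h2
  have hk := congrArg QuaternionAlgebra.imK h2
  simp [Quaternion.re_mul, Quaternion.imI_mul, Quaternion.imJ_mul, Quaternion.imK_mul] at hre hi hj hk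
  have hre0 : J.re = 0 := by
    by_contra h0
    have hbi : J.imI = 0 := by
      rcases mul_eq_zero.mp (by nlinarith : J.re * J.imI = 0) with h' | h'
      · exact absurd h' h0
      · exact h'
    have hbj : J.imJ = 0 := by
      rcases mul_eq_zero.mp (by nlinarith : J.re * J.imJ = 0) with h' | h'
      · exact absurd h' h0
      · exact h'
    have hbk : J.imK = 0 := by
      rcases mul_eq_zero.mp (by nlinarith : J.re * J.imK = 0) with h' | h'
      · exact absurd h' h0
      · exact h'
    nlinarith [sq_nonneg J.re]
  refine ⟨hre0, ?_⟩
  rw [Quaternion.normSq_def']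
  nlinarith

lemma sph_re {J : ℍ'} (h : J ∈ Sph) : J.re = 0 := (sph_re_normSq h).1

lemma sph_normSq {J : ℍ'} (h : J ∈ Sph) : Quaternion.normSq J = 1 := (sph_re_normSq h).2

lemma sph_norm {J : ℍ'} (h : J ∈ Sph) : ‖J‖ = 1 := by
  have := sph_normSq h
  rw [Quaternion.normSq_eq_norm_mul_self] at this
  nlinarith [norm_nonneg J]

lemma sph_star {J : ℍ'} (h : J ∈ Sph) : star J = -J := by
  ext <;> simp [sph_re h]

lemma sph_neg {J : ℍ'} (h : J ∈ Sph) : -J ∈ Sph := by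
  have : J ^ 2 = -1 := h
  show (-J) ^ 2 = -1
  rwa [neg_sq]

lemma sph_closed : IsClosed Sph := by
  have : Sph = (fun q : ℍ' => q ^ 2) ⁻¹' {-1} := by
    ext q; simp [Sph]
  rw [this]
  exact IsClosed.preimage (continuous_pow 2) isClosed_singleton

lemma sph_measurable : MeasurableSet Sph := sph_closed.measurableSet

/-! #### qexp basics -/

lemma qexp_re (t : ℝ) {I : ℍ'} (hI : I ∈ Sph) : (qexp t I).re = Real.cos t := by
  simp [qexp, sph_re hI, Quaternion.re_one]

lemma qexp_im (t : ℝ) {I : ℍ'} (hI : I ∈ Sph) : (qexp t I).im = Real.sin t • I := by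
  ext <;> simp [qexp, sph_re hI, Quaternion.imI_one, Quaternion.imJ_one, Quaternion.imK_one]

lemma qexp_neg (t : ℝ) (I : ℍ') : qexp (-t) I = qexp t (-I) := by
  simp [qexp, Real.cos_neg, Real.sin_neg, neg_smul, smul_neg]

lemma coe_add_smul_normSq (c s : ℝ) {J : ℍ'} (hJ : J ∈ Sph) :
    Quaternion.normSq ((c : ℍ') + s • J) = c ^ 2 + s ^ 2 := by
  have h1 := sph_normSq hJ
  have h0 := sph_re hJ
  rw [Quaternion.normSq_def'] at h1 ⊢
  simp only [Quaternion.re_add, Quaternion.imI_add, Quaternion.imJ_add, Quaternion.imK_add,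
    Quaternion.re_coe, Quaternion.imI_coe, Quaternion.imJ_coe, Quaternion.imK_coe,
    Quaternion.re_smul, Quaternion.imI_smul, Quaternion.imJ_smul, Quaternion.imK_smul,
    smul_eq_mul, h0]
  rw [h0] at h1
  linear_combination s ^ 2 * h1

lemma coe_add_smul_mem_sphere {c s : ℝ} (hcs : c ^ 2 + s ^ 2 = 1) {J : ℍ'} (hJ : J ∈ Sph) :
    (c : ℍ') + s • J ∈ Metric.sphere (0 : ℍ') 1 := by
  rw [mem_sphere_zero_iff_norm]
  have := coe_add_smul_normSq c s hJ
  rw [Quaternion.normSq_eq_norm_mul_self, hcs] at this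
  nlinarith [norm_nonneg ((c : ℍ') + s • J)]

lemma qexp_eq_coe_add_smul (t : ℝ) (I : ℍ') : qexp t I = (Real.cos t : ℍ') + Real.sin t • I := by
  rw [qexp]
  congr 1
  exact (Algebra.algebraMap_eq_smul_one (Real.cos t)).symm

lemma qexp_mem_sphere (t : ℝ) {I : ℍ'} (hI : I ∈ Sph) :
    qexp t I ∈ Metric.sphere (0 : ℍ') 1 := by
  rw [qexp_eq_coe_add_smul]
  exact coe_add_smul_mem_sphere (by nlinarith [Real.sin_sq_add_cos_sq t]) hI

lemma continuous_qexpP : Continuous (fun p : ℍ' × ℝ => qexp p.2 p.1) := by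
  unfold qexp
  fun_prop

lemma sphere_re_im (q : ℍ') (hq : q ∈ Metric.sphere (0 : ℍ') 1) :
    q.re ^ 2 + ‖q.im‖ ^ 2 = 1 := by
  rw [mem_sphere_zero_iff_norm] at hq
  have h1 : Quaternion.normSq q = 1 := by rw [Quaternion.normSq_eq_norm_mul_self, hq]; ring
  have h2 : Quaternion.normSq q.im = ‖q.im‖ * ‖q.im‖ := Quaternion.normSq_eq_norm_mul_self q.im
  rw [Quaternion.normSq_def'] at h1 h2
  simp only [Quaternion.re_im, Quaternion.imI_im, Quaternion.imJ_im, Quaternion.imK_im] at h2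
  nlinarith

/-! #### conjugation by a unit mapping J to -J -/

lemma exists_conj_neg {J : ℍ'} (hJ : J ∈ Sph) :
    ∃ w : ℍ', ‖w‖ = 1 ∧ w * J * star w = -J := by
  have hre := sph_re hJ
  -- first, a nonzero pure quaternion anticommuting with J
  obtain ⟨w, hw0, hwre, hanti⟩ :
      ∃ w : ℍ', w ≠ 0 ∧ w.re = 0 ∧ w * J + J * w = 0 := by
    by_cases h : J.imI = 0 ∧ J.imJ = 0
    · set w0 : ℍ' := ⟨0, 1, 0, 0⟩ with hw0
      refine ⟨w0, ?_, rfl, ?_⟩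
      · intro hcon
        have := congrArg QuaternionAlgebra.imI hcon
        norm_num [hw0] at this
      · ext <;> simp [Quaternion.re_mul, Quaternion.imI_mul, Quaternion.imJ_mul,
          Quaternion.imK_mul] <;> simp [hw0, hre, h.1, h.2]
    · set w0 : ℍ' := ⟨0, -J.imJ, J.imI, 0⟩ with hw0
      refine ⟨w0, ?_, rfl, ?_⟩
      · intro hcon
        have h1 := congrArg QuaternionAlgebra.imI hcon
        have h2 := congrArg QuaternionAlgebra.imJ hcon
        simp [hw0] at h1 h2
        exact h ⟨h2, h1⟩
      · ext <;> simp [Quaternion.re_mul, Quaternion.imI_mul, Quaternion.imJ_mul,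
          Quaternion.imK_mul] <;> simp [hw0, hre] <;> ring
  set w' : ℍ' := ‖w‖⁻¹ • w with hw'
  have hnw : ‖w'‖ = 1 := by
    rw [hw', norm_smul, norm_inv, norm_norm, inv_mul_cancel₀ (norm_ne_zero_iff.mpr hw0)]
  have hre' : w'.re = 0 := by rw [hw', Quaternion.re_smul, hwre, smul_zero]
  have hanti' : w' * J = -(J * w') := by
    have : w * J = -(J * w) := eq_neg_of_add_eq_zero_left hanti
    rw [hw', smul_mul_assoc, this, mul_smul_comm, smul_neg]
  have hstar' : star w' = -w' := by ext <;> simp [hre']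
  have hsq : w' * w' = -1 := by
    have h1 := Quaternion.star_mul_self w'
    have h2 : Quaternion.normSq w' = 1 := by
      rw [Quaternion.normSq_eq_norm_mul_self, hnw]; ring
    rw [hstar', h2, Quaternion.coe_one, neg_mul] at h1
    have := congrArg (fun x : ℍ' => -x) h1
    simpa using this
  refine ⟨w', hnw, ?_⟩
  rw [hstar', hanti']
  calc -(J * w') * -w' = J * (w' * w') := by rw [neg_mul_neg, mul_assoc]
    _ = -J := by rw [hsq]; simp

/-! ### Antipodal invariance of σ -/

abbrev US := Metric.sphere (0 : ℍ') 1

def vU : Measure US := (MeasureTheory.Measure.haarMeasure (⊤ : TopologicalSpace.PositiveCompacts US)).inv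

instance : vU.IsMulRightInvariant := by unfold vU; infer_instance

instance : IsProbabilityMeasure vU := by
  constructor
  rw [vU, Measure.inv_apply, Set.inv_univ]
  have : (univ : Set US) = ((⊤ : TopologicalSpace.PositiveCompacts US) : Set US) := by
    rw [TopologicalSpace.PositiveCompacts.coe_top]
  rw [this]
  exact MeasureTheory.Measure.haarMeasure_self

lemma inv_eq_star_of_norm_one {u : ℍ'} (hu : ‖u‖ = 1) : u⁻¹ = star u := by
  rw [Quaternion.inv_def]
  have : Quaternion.normSq u = 1 := by
    rw [Quaternion.normSq_eq_norm_mul_self, hu]; ring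
  rw [this]
  simp

variable {σ : Measure ℍ'}

lemma ae_sph (hσ : IsSphereMeasure σ) : ∀ᵐ J ∂σ, J ∈ Sph := by
  rw [ae_iff]
  have : {a : ℍ' | ¬a ∈ Sph} = Sphᶜ := rfl
  rw [this]
  exact hσ.supp

lemma restrict_sph (hσ : IsSphereMeasure σ) : σ.restrict Sph = σ :=
  Measure.restrict_eq_self_of_ae_mem (ae_sph hσ)

lemma rot_conj_measurable (u : US) : Measurable (fun q : ℍ' => (u : ℍ') * q * star (u : ℍ')) :=
  ((continuous_const.mul continuous_id).mul continuous_const).measurable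

lemma rot_set (hσ : IsSphereMeasure σ) (u : US) {A : Set ℍ'} (hA : MeasurableSet A) :
    σ ((fun q : ℍ' => (u : ℍ') * q * star (u : ℍ')) ⁻¹' A) = σ A := by
  have hu : ‖(u : ℍ')‖ = 1 := mem_sphere_zero_iff_norm.mp u.2
  have h1 : (fun q : ℍ' => (u : ℍ') * q * star (u : ℍ'))
      = (fun q : ℍ' => (u : ℍ') * q * (u : ℍ')⁻¹) := by
    funext q; rw [inv_eq_star_of_norm_one hu]
  rw [h1]
  conv_rhs => rw [← hσ.rotInv (u : ℍ') hu]
  have hm : Measurable fun q : ℍ' => (u : ℍ') * q * ((u : ℍ'))⁻¹ :=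
    (measurable_const.mul measurable_id').mul measurable_const
  rw [Measure.map_apply hm hA]

/-- average of the indicator of `A` over the conjugation orbit. -/
def PsiAvg (A : Set ℍ') (K : ℍ') : ℝ≥0∞ :=
  ∫⁻ u : US, A.indicator 1 ((u : ℍ') * K * star (u : ℍ')) ∂vU

set_option maxHeartbeats 1000000 in
/-- The key step: `σ` is invariant under the antipodal map. -/
lemma neg_map (hσ : IsSphereMeasure σ) : Measure.map (fun q : ℍ' => -q) σ = σ := by
  have hprob : IsProbabilityMeasure σ := hσ.prob
  refine Measure.ext fun A hA => ?_
  rw [Measure.map_apply measurable_neg hA]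
  have hind : Measurable (A.indicator (1 : ℍ' → ℝ≥0∞)) := measurable_const.indicator hA
  have key : ∀ g : ℍ' → ℍ', Measurable g → (∀ u : US, ∀ q : ℍ',
        (u : ℍ') * g q * star (u : ℍ') = g ((u : ℍ') * q * star (u : ℍ'))) →
      σ (g ⁻¹' A) = ∫⁻ J, PsiAvg A (g J) ∂σ := by
    intro g hg hcomm
    have step1 : ∀ u : US, σ ((fun q => (u : ℍ') * g q * star (u : ℍ')) ⁻¹' A) = σ (g ⁻¹' A) := by
      intro u
      have : (fun q => (u : ℍ') * g q * star (u : ℍ')) ⁻¹' A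
          = (fun q : ℍ' => (u : ℍ') * q * star (u : ℍ')) ⁻¹' (g ⁻¹' A) := by
        ext q
        simp only [Set.mem_preimage, hcomm u q]
      rw [this]
      exact rot_set hσ u (hg hA)
    have hmeas2 : ∀ u : US, Measurable (fun q => (u : ℍ') * g q * star (u : ℍ')) := fun u =>
      ((continuous_const.mul continuous_id).mul continuous_const).measurable.comp hg
    have step2 : σ (g ⁻¹' A)
        = ∫⁻ u : US, ∫⁻ J, A.indicator 1 ((u : ℍ') * g J * star (u : ℍ')) ∂σ ∂vU := by
      have e1 : σ (g ⁻¹' A) = ∫⁻ u : US, σ ((fun q => (u : ℍ') * g q * star (u : ℍ')) ⁻¹' A) ∂vU := by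
        simp_rw [step1]
        rw [lintegral_const, measure_univ, mul_one]
      have e2 : ∀ u : US, σ ((fun q => (u : ℍ') * g q * star (u : ℍ')) ⁻¹' A)
          = ∫⁻ J, A.indicator 1 ((u : ℍ') * g J * star (u : ℍ')) ∂σ := by
        intro u
        rw [← lintegral_indicator_one ((hmeas2 u) hA)]
        refine lintegral_congr fun J => ?_
        by_cases hmem : (u : ℍ') * g J * star (u : ℍ') ∈ A
        · rw [Set.indicator_of_mem hmem,
            Set.indicator_of_mem
              (show J ∈ (fun q => (u : ℍ') * g q * star (u : ℍ')) ⁻¹' A from hmem)]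
          rfl
        · rw [Set.indicator_of_notMem hmem,
            Set.indicator_of_notMem
              (show J ∉ (fun q => (u : ℍ') * g q * star (u : ℍ')) ⁻¹' A from hmem)]
      rw [e1]
      exact lintegral_congr e2
    have hc : Measurable (fun p : US × ℍ' => (p.1 : ℍ')) :=
      (continuous_subtype_val.comp continuous_fst).measurable
    have hgp : Measurable (fun p : US × ℍ' => g p.2) := hg.comp measurable_snd
    have hF : Measurable (fun p : US × ℍ' => (p.1 : ℍ') * g p.2 * star (p.1 : ℍ')) :=
      (hc.mul hgp).mul (continuous_star.measurable.comp hc)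
    have hjoint : AEMeasurable (Function.uncurry fun (u : US) (J : ℍ') =>
        A.indicator (1 : ℍ' → ℝ≥0∞) ((u : ℍ') * g J * star (u : ℍ'))) (vU.prod σ) := by
      have huc : Function.uncurry (fun (u : US) (J : ℍ') =>
          A.indicator (1 : ℍ' → ℝ≥0∞) ((u : ℍ') * g J * star (u : ℍ')))
          = fun p : US × ℍ' =>
              A.indicator (1 : ℍ' → ℝ≥0∞) ((p.1 : ℍ') * g p.2 * star (p.1 : ℍ')) := rfl
      rw [huc]
      exact (hind.comp hF).aemeasurable
    rw [step2, lintegral_lintegral_swap hjoint]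
    rfl
  have hneg : σ ((fun q : ℍ' => -q) ⁻¹' A) = ∫⁻ J, PsiAvg A (-J) ∂σ :=
    key (fun q => -q) measurable_neg (by intro u q; simp [mul_neg, neg_mul])
  have hid : σ A = ∫⁻ J, PsiAvg A J ∂σ := by
    have := key id measurable_id (by intro u q; rfl)
    simpa using this
  rw [hneg, hid]
  refine lintegral_congr_ae ((ae_sph hσ).mono fun J hJ => ?_)
  obtain ⟨w, hw1, hwJ⟩ := exists_conj_neg hJ
  set w' : US := ⟨w, mem_sphere_zero_iff_norm.mpr hw1⟩ with hw'
  have hcoe : ∀ u v : US, ((u * v : US) : ℍ') = (u : ℍ') * (v : ℍ') := fun u v => rfl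
  have hpt : ∀ u : US, A.indicator (1 : ℍ' → ℝ≥0∞) ((u : ℍ') * (-J) * star (u : ℍ'))
      = A.indicator 1 (((u * w' : US) : ℍ') * J * star ((u * w' : US) : ℍ')) := by
    intro u
    congr 1
    rw [hcoe, star_mul]
    have : (u : ℍ') * w * J * (star w * star (u : ℍ'))
        = (u : ℍ') * (w * J * star w) * star (u : ℍ') := by simp only [mul_assoc]
    rw [this, hwJ]
  calc PsiAvg A (-J)
      = ∫⁻ u : US, (fun v : US => A.indicator 1 ((v : ℍ') * J * star (v : ℍ'))) (u * w') ∂vU := by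
        unfold PsiAvg
        exact lintegral_congr hpt
    _ = PsiAvg A J :=
        lintegral_mul_right_eq_self (fun v : US => A.indicator 1 ((v : ℍ') * J * star (v : ℍ'))) w'

/-- transfer to Bochner integrals -/
lemma integral_neg_eq (hσ : IsSphereMeasure σ) {f : ℍ' → ℍ'}
    (hf : AEStronglyMeasurable f σ) : ∫ J, f (-J) ∂σ = ∫ J, f J ∂σ := by
  have haesm : AEStronglyMeasurable f (Measure.map (fun q : ℍ' => -q) σ) := by
    rw [neg_map hσ]; exact hf
  have h := integral_map (measurable_neg.aemeasurable :
    AEMeasurable (fun q : ℍ' => -q) σ) haesm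
  rw [neg_map hσ] at h
  exact h.symm

lemma integral_I_zero (hσ : IsSphereMeasure σ) : ∫ J : ℍ', J ∂σ = 0 := by
  have h := integral_neg_eq hσ (f := fun J : ℍ' => J)
    (aestronglyMeasurable_id : AEStronglyMeasurable (fun J : ℍ' => J) σ)
  have h' : ∫ J : ℍ', -J ∂σ = ∫ J : ℍ', J ∂σ := h
  rw [integral_neg] at h'
  have h2 : (∫ J : ℍ', J ∂σ) + ∫ J : ℍ', J ∂σ = 0 := by
    nth_rewrite 1 [← h']
    exact neg_add_cancel _
  exact add_self_eq_zero.mp h2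

/-! ### Measure plumbing -/

instance arc_prob : IsProbabilityMeasure arcMeasure := by
  constructor
  rw [arcMeasure, Measure.smul_apply, Measure.restrict_apply MeasurableSet.univ, Set.univ_inter,
    Real.volume_Ico, sub_zero, smul_eq_mul]
  exact ENNReal.inv_mul_cancel (ENNReal.ofReal_pos.mpr Real.two_pi_pos).ne' ENNReal.ofReal_ne_top

lemma arc_prob' : arcMeasure (univ : Set ℝ) = 1 := measure_univ

lemma bMeasure_prob (hσ : IsSphereMeasure σ) : IsProbabilityMeasure (bMeasure σ) := by
  haveI := hσ.prob
  exact Measure.isProbabilityMeasure_map continuous_qexpP.measurable.aemeasurable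

lemma ae_prod_sph (hσ : IsSphereMeasure σ) :
    ∀ᵐ p : ℍ' × ℝ ∂(σ.prod arcMeasure), p.1 ∈ Sph := by
  haveI := hσ.prob
  rw [ae_iff]
  have h1 : {p : ℍ' × ℝ | ¬p.1 ∈ Sph} = Sphᶜ ×ˢ (univ : Set ℝ) := by
    ext p; simp
  rw [h1, Measure.prod_prod, hσ.supp, zero_mul]

lemma bMeasure_ae_sphere (hσ : IsSphereMeasure σ) :
    ∀ᵐ q ∂(bMeasure σ), q ∈ Metric.sphere (0 : ℍ') 1 := by
  haveI := hσ.prob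
  rw [ae_iff]
  have h1 : {q : ℍ' | ¬q ∈ Metric.sphere (0 : ℍ') 1} = (Metric.sphere (0 : ℍ') 1)ᶜ := rfl
  rw [h1, bMeasure, Measure.map_apply continuous_qexpP.measurable
    (Metric.isClosed_sphere.measurableSet.compl)]
  refine le_antisymm ?_ zero_le'
  calc (σ.prod arcMeasure) ((fun p : ℍ' × ℝ => qexp p.2 p.1) ⁻¹' (Metric.sphere (0 : ℍ') 1)ᶜ)
      ≤ (σ.prod arcMeasure) (Sphᶜ ×ˢ (univ : Set ℝ)) := by
        refine measure_mono fun p hp => ?_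
        simp only [Set.mem_preimage, Set.mem_compl_iff] at hp
        exact Set.mem_prod.mpr ⟨fun hS => hp (qexp_mem_sphere p.2 hS), trivial⟩
    _ = 0 := by rw [Measure.prod_prod, hσ.supp, zero_mul]

lemma bMeasure_restrict_sphere (hσ : IsSphereMeasure σ) :
    (bMeasure σ).restrict (Metric.sphere (0 : ℍ') 1) = bMeasure σ :=
  Measure.restrict_eq_self_of_ae_mem (bMeasure_ae_sphere hσ)

/-! ### The candidate projection -/

variable (σ) in
def aFun (φ : ℍ' → ℍ') (t : ℝ) : ℍ' := ∫ J, φ (qexp t J) ∂σ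

variable (σ) in
def bFun (φ : ℍ' → ℍ') (t : ℝ) : ℍ' := -∫ J, J * φ (qexp t J) ∂σ

variable (σ) in
def GFun (φ : ℍ' → ℍ') (q : ℍ') : ℍ' :=
  (∫ J, φ ((q.re : ℍ') + ‖q.im‖ • J) ∂σ) -
    (‖q.im‖⁻¹ • q.im) * ∫ J, J * φ ((q.re : ℍ') + ‖q.im‖ • J) ∂σ

section PhiLayer

variable (hσ : IsSphereMeasure σ) {φ : ℍ' → ℍ'}
  (hcont : ContinuousOn φ (Metric.sphere (0 : ℍ') 1)) {M : ℝ}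
  (hM : ∀ q ∈ Metric.sphere (0 : ℍ') 1, ‖φ q‖ ≤ M)

include hσ hcont in
lemma aesm_phi_qexp (t : ℝ) : AEStronglyMeasurable (fun J => φ (qexp t J)) σ := by
  have h1 : ContinuousOn (fun J : ℍ' => φ (qexp t J)) Sph := by
    refine hcont.comp ?_ ?_
    · exact (continuous_qexpP.comp (continuous_id.prodMk continuous_const)).continuousOn
    · intro J hJ
      exact qexp_mem_sphere t hJ
  have h2 := h1.aestronglyMeasurable (μ := σ) sph_measurable
  rwa [restrict_sph hσ] at h2

include hM in
lemma M_nonneg : 0 ≤ M := by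
  refine le_trans (norm_nonneg (φ 1)) (hM 1 ?_)
  simp [mem_sphere_zero_iff_norm]

include hσ hcont hM in
lemma integrable_phi_qexp (t : ℝ) : Integrable (fun J => φ (qexp t J)) σ := by
  haveI := hσ.prob
  refine Integrable.mono' (integrable_const M) (aesm_phi_qexp hσ hcont t) ?_
  refine (ae_sph hσ).mono fun J hJ => hM _ (qexp_mem_sphere t hJ)

include hσ in
lemma integrable_id_sph : Integrable (fun J : ℍ' => J) σ := by
  haveI := hσ.prob
  refine Integrable.mono' (integrable_const 1) aestronglyMeasurable_id ?_
  exact (ae_sph hσ).mono fun J hJ => le_of_eq (sph_norm hJ)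

include hσ hcont hM in
lemma integrable_mul_phi_qexp (t : ℝ) : Integrable (fun J => J * φ (qexp t J)) σ := by
  haveI := hσ.prob
  refine Integrable.mono' (integrable_const M)
    (aestronglyMeasurable_id.mul (aesm_phi_qexp hσ hcont t)) ?_
  refine (ae_sph hσ).mono fun J hJ => ?_
  rw [norm_mul, sph_norm hJ, one_mul]
  exact hM _ (qexp_mem_sphere t hJ)

include hσ hcont in
lemma aFun_even (t : ℝ) : aFun σ φ (-t) = aFun σ φ t := by
  unfold aFun
  simp_rw [qexp_neg]
  exact integral_neg_eq hσ (f := fun K : ℍ' => φ (qexp t K)) (aesm_phi_qexp hσ hcont t)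

include hσ hcont in
lemma bFun_odd (t : ℝ) : bFun σ φ (-t) = -bFun σ φ t := by
  unfold bFun
  rw [neg_neg]
  simp_rw [qexp_neg]
  have key : ∫ J : ℍ', (-J) * φ (qexp t (-J)) ∂σ = ∫ J, J * φ (qexp t J) ∂σ :=
    integral_neg_eq hσ (f := fun K : ℍ' => K * φ (qexp t K))
      (by exact aestronglyMeasurable_id.mul (aesm_phi_qexp hσ hcont t))
  simp only [neg_mul] at key
  rw [integral_neg] at key
  exact key

include hσ hcont in
lemma GFun_qexp {I : ℍ'} (hI : I ∈ Sph) (t : ℝ) :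
    GFun σ φ (qexp t I) = aFun σ φ t + I * bFun σ φ t := by
  have hre : (qexp t I).re = Real.cos t := qexp_re t hI
  have him : (qexp t I).im = Real.sin t • I := qexp_im t hI
  have hnim : ‖Real.sin t • I‖ = |Real.sin t| := by
    rw [norm_smul, Real.norm_eq_abs, sph_norm hI, mul_one]
  unfold GFun
  rw [hre, him, hnim]
  rcases lt_trichotomy (Real.sin t) 0 with hs | hs | hs
  · have habs : |Real.sin t| = -Real.sin t := abs_of_neg hs
    rw [habs]
    have hsm : (-Real.sin t)⁻¹ • (Real.sin t • I) = -I := by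
      rw [smul_smul, show (-Real.sin t)⁻¹ * Real.sin t = -1 by
        rw [inv_neg, neg_mul, inv_mul_cancel₀ hs.ne], neg_one_smul]
    rw [hsm]
    have e1 : ∀ J : ℍ', (Real.cos t : ℍ') + (-Real.sin t) • J = qexp t (-J) := by
      intro J
      rw [qexp_eq_coe_add_smul, neg_smul, smul_neg]
    simp_rw [e1]
    have ea : ∫ J, φ (qexp t (-J)) ∂σ = aFun σ φ t :=
      integral_neg_eq hσ (f := fun K : ℍ' => φ (qexp t K)) (aesm_phi_qexp hσ hcont t)
    have eb : ∫ J, J * φ (qexp t (-J)) ∂σ = bFun σ φ t := by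
      have key : ∫ J : ℍ', (-J) * φ (qexp t (-J)) ∂σ = ∫ J, J * φ (qexp t J) ∂σ :=
        integral_neg_eq hσ (f := fun K : ℍ' => K * φ (qexp t K))
          (by exact aestronglyMeasurable_id.mul (aesm_phi_qexp hσ hcont t))
      simp only [neg_mul] at key
      rw [integral_neg] at key
      show ∫ J, J * φ (qexp t (-J)) ∂σ = -∫ J, J * φ (qexp t J) ∂σ
      have := congrArg (fun x : ℍ' => -x) key
      simpa using this
    rw [ea, eb, neg_mul, sub_neg_eq_add]
  · have e3 : ∀ J : ℍ', qexp t J = ((Real.cos t : ℝ) : ℍ') := by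
      intro J
      rw [qexp_eq_coe_add_smul, hs, zero_smul, add_zero]
    have hb0 : bFun σ φ t = 0 := by
      unfold bFun
      simp_rw [e3]
      rw [integral_qmul_right _ (integrable_id_sph hσ), integral_I_zero hσ, zero_mul, neg_zero]
    rw [hb0, mul_zero, add_zero]
    simp only [hs, abs_zero, zero_smul, smul_zero, add_zero, inv_zero, zero_mul, sub_zero]
    unfold aFun
    exact integral_congr_ae (Filter.Eventually.of_forall fun J => (congrArg φ (e3 J)).symm)
  · have habs : |Real.sin t| = Real.sin t := abs_of_pos hs
    rw [habs]
    have hsm : (Real.sin t)⁻¹ • (Real.sin t • I) = I := by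
      rw [smul_smul, inv_mul_cancel₀ hs.ne', one_smul]
    rw [hsm]
    have e1 : ∀ J : ℍ', (Real.cos t : ℍ') + Real.sin t • J = qexp t J := by
      intro J; rw [qexp_eq_coe_add_smul]
    simp_rw [e1]
    have hbb : ∫ J, J * φ (qexp t J) ∂σ = -bFun σ φ t := by
      unfold bFun; rw [neg_neg]
    rw [hbb, mul_neg, sub_neg_eq_add]
    rfl

include hσ hcont in
lemma isSlice_GFun : IsSlice (GFun σ φ) := by
  intro I hI J hJ t
  rw [GFun_qexp hσ hcont hJ t, GFun_qexp hσ hcont hI t, GFun_qexp hσ hcont hI (-t),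
    aFun_even hσ hcont, bFun_odd hσ hcont]
  set A := aFun σ φ t
  set B := bFun σ φ t
  have hII : I * I = -1 := sph_mul_self hI
  have e1 : A + I * B + (A + I * -B) = A + A := by rw [mul_neg]; abel
  have e2 : A + I * -B - (A + I * B) = -(I * B) + -(I * B) := by rw [mul_neg]; abel
  rw [e1, e2, double_div_two, div_two_mul_double, mul_neg]
  have e3 : J * I * (I * B) = -(J * B) := by
    rw [← mul_assoc, mul_assoc J I I, hII]
    simp
  rw [e3, neg_neg]

include hσ hcont hM in
lemma memL2_GFun : MemLp (GFun σ φ) 2 (bMeasure σ) := by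
  haveI := hσ.prob
  haveI := bMeasure_prob hσ
  have hsphm : MeasurableSet (Metric.sphere (0 : ℍ') 1) := Metric.isClosed_sphere.measurableSet
  -- a.e.-strong measurability
  have haesm : ∀ ψ : ℍ' × ℍ' → ℍ', ContinuousOn ψ ((Metric.sphere (0 : ℍ') 1) ×ˢ Sph) →
      AEStronglyMeasurable ψ ((bMeasure σ).prod σ) := by
    intro ψ hψ
    have h2 := hψ.aestronglyMeasurable (μ := (bMeasure σ).prod σ) (hsphm.prod sph_measurable)
    rwa [← Measure.prod_restrict, restrict_sph hσ, bMeasure_restrict_sphere hσ] at h2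
  have hinner : Continuous (fun p : ℍ' × ℍ' => ((p.1.re : ℝ) : ℍ') + ‖p.1.im‖ • p.2) := by
    have c1 : Continuous (fun p : ℍ' × ℍ' => ((p.1.re : ℝ) : ℍ')) :=
      Quaternion.continuous_coe.comp (Quaternion.continuous_re.comp continuous_fst)
    have c2 : Continuous (fun p : ℍ' × ℍ' => ‖p.1.im‖ • p.2) :=
      ((Quaternion.continuous_im.comp continuous_fst).norm).smul continuous_snd
    exact c1.add c2
  have hmt : MapsTo (fun p : ℍ' × ℍ' => ((p.1.re : ℝ) : ℍ') + ‖p.1.im‖ • p.2)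
      ((Metric.sphere (0 : ℍ') 1) ×ˢ Sph) (Metric.sphere (0 : ℍ') 1) := by
    rintro ⟨q, J⟩ ⟨hq, hJ⟩
    exact coe_add_smul_mem_sphere (sphere_re_im q hq) hJ
  have hA : AEStronglyMeasurable (fun q : ℍ' => ∫ J, φ ((q.re : ℍ') + ‖q.im‖ • J) ∂σ)
      (bMeasure σ) := by
    apply AEStronglyMeasurable.integral_prod_right'
      (f := fun p : ℍ' × ℍ' => φ (((p.1.re : ℝ) : ℍ') + ‖p.1.im‖ • p.2))
    exact haesm _ (hcont.comp hinner.continuousOn hmt)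
  have hB : AEStronglyMeasurable (fun q : ℍ' => ∫ J, J * φ ((q.re : ℍ') + ‖q.im‖ • J) ∂σ)
      (bMeasure σ) := by
    apply AEStronglyMeasurable.integral_prod_right'
      (f := fun p : ℍ' × ℍ' => p.2 * φ (((p.1.re : ℝ) : ℍ') + ‖p.1.im‖ • p.2))
    exact haesm _ (continuous_snd.continuousOn.mul (hcont.comp hinner.continuousOn hmt))
  have hnq : Measurable (fun q : ℍ' => ‖q.im‖⁻¹ • q.im) :=
    ((Quaternion.continuous_im.norm.measurable).inv).smul Quaternion.continuous_im.measurable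
  have haesmG : AEStronglyMeasurable (GFun σ φ) (bMeasure σ) :=
    hA.sub ((hnq.aestronglyMeasurable).mul hB)
  refine MemLp.of_bound haesmG (M + M) ?_
  refine (bMeasure_ae_sphere hσ).mono fun q hq => ?_
  have hb1 : ∀ᵐ J ∂σ, ‖φ ((q.re : ℍ') + ‖q.im‖ • J)‖ ≤ M := by
    refine (ae_sph hσ).mono fun J hJ => ?_
    exact hM _ (coe_add_smul_mem_sphere (sphere_re_im q hq) hJ)
  have h1 : ‖∫ J, φ ((q.re : ℍ') + ‖q.im‖ • J) ∂σ‖ ≤ M := by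
    have := norm_integral_le_of_norm_le_const (μ := σ) hb1
    simpa using this
  have hb2 : ∀ᵐ J ∂σ, ‖J * φ ((q.re : ℍ') + ‖q.im‖ • J)‖ ≤ M := by
    refine (ae_sph hσ).mono fun J hJ => ?_
    rw [norm_mul, sph_norm hJ, one_mul]
    exact hM _ (coe_add_smul_mem_sphere (sphere_re_im q hq) hJ)
  have h2 : ‖∫ J, J * φ ((q.re : ℍ') + ‖q.im‖ • J) ∂σ‖ ≤ M := by
    have := norm_integral_le_of_norm_le_const (μ := σ) hb2
    simpa using this
  have h3 : ‖(‖q.im‖⁻¹ • q.im : ℍ')‖ ≤ 1 := by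
    rw [norm_smul, norm_inv, norm_norm]
    rcases eq_or_ne ‖q.im‖ 0 with h | h
    · rw [h]; simp
    · rw [inv_mul_cancel₀ h]
  calc ‖GFun σ φ q‖ ≤ ‖∫ J, φ ((q.re : ℍ') + ‖q.im‖ • J) ∂σ‖ +
        ‖(‖q.im‖⁻¹ • q.im : ℍ') * ∫ J, J * φ ((q.re : ℍ') + ‖q.im‖ • J) ∂σ‖ :=
      norm_sub_le _ _
    _ ≤ M + M := by
      refine add_le_add h1 ?_
      rw [norm_mul]
      calc ‖(‖q.im‖⁻¹ • q.im : ℍ')‖ * ‖∫ J, J * φ ((q.re : ℍ') + ‖q.im‖ • J) ∂σ‖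
          ≤ 1 * M := mul_le_mul h3 h2 (norm_nonneg _) zero_le_one
        _ = M := one_mul M

include hσ hcont hM in
lemma final_expand (t : ℝ) (I : ℍ') :
    ∫ J, (1 - I * J) * φ (qexp t J) ∂σ = aFun σ φ t + I * bFun σ φ t := by
  have e : ∀ J : ℍ', (1 - I * J) * φ (qexp t J)
      = φ (qexp t J) - I * (J * φ (qexp t J)) := by
    intro J
    rw [sub_mul, one_mul, mul_assoc]
  simp_rw [e]
  rw [integral_sub (integrable_phi_qexp hσ hcont hM t)
    ((integrable_mul_phi_qexp hσ hcont hM t).const_mul I),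
    integral_qmul_left I (integrable_mul_phi_qexp hσ hcont hM t)]
  have hbb : ∫ J, J * φ (qexp t J) ∂σ = -bFun σ φ t := by unfold bFun; rw [neg_neg]
  rw [hbb, mul_neg, sub_neg_eq_add]
  rfl

include hσ hcont hM in
lemma ortho (hφ2 : MemLp φ 2 (bMeasure σ)) {g : ℍ' → ℍ'} (hg : IsSlice g)
    (hg2 : MemLp g 2 (bMeasure σ)) :
    ∫ q, (star (g q) * (φ q - GFun σ φ q)).re ∂(bMeasure σ) = 0 := by
  haveI := hσ.prob
  haveI := bMeasure_prob hσ
  set qi : ℍ' := ⟨0, 1, 0, 0⟩ with hqidef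
  have hqi : qi ∈ Sph := by
    show qi ^ 2 = -1
    rw [sq]
    ext <;> simp [Quaternion.re_mul, Quaternion.imI_mul, Quaternion.imJ_mul,
      Quaternion.imK_mul] <;> simp [hqidef]
  set a : ℝ → ℍ' := fun t => (g (qexp t qi) + g (qexp (-t) qi)) / 2 with ha
  set b : ℝ → ℍ' := fun t => qi / 2 * (g (qexp (-t) qi) - g (qexp t qi)) with hb
  have hrep : ∀ (t : ℝ), ∀ J ∈ Sph, g (qexp t J) = a t + J * b t := by
    intro t J hJ
    rw [hg qi hqi J hJ t, assoc_half]
  -- the inner integral vanishes for every t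
  have inner0 : ∀ t : ℝ,
      ∫ J, (star (a t + J * b t) * (φ (qexp t J) - (aFun σ φ t + J * bFun σ φ t))).re ∂σ = 0 := by
    intro t
    set A := aFun σ φ t with hA
    set B := bFun σ φ t with hBdef
    set X : ℍ' → ℍ' := fun J => φ (qexp t J) with hX
    have hiX : Integrable X σ := integrable_phi_qexp hσ hcont hM t
    have hiJX : Integrable (fun J => J * X J) σ := integrable_mul_phi_qexp hσ hcont hM t
    have hiI : Integrable (fun J : ℍ' => J) σ := integrable_id_sph hσ
    set W : ℍ' → ℍ' := fun J => X J - A - J * B with hW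
    have hiW : Integrable W σ := (hiX.sub (integrable_const A)).sub (hiI.mul_const B)
    have hiXA : Integrable (fun J => X J - A) σ := hiX.sub (integrable_const A)
    have hiJB : Integrable (fun J : ℍ' => J * B) σ := hiI.mul_const B
    have hWint : ∫ J, W J ∂σ = 0 := by
      have hWe : ∀ J, W J = (X J - A) - J * B := fun J => rfl
      simp_rw [hWe]
      rw [integral_sub hiXA hiJB,
        integral_sub hiX (integrable_const A), integral_const,
        integral_qmul_right B hiI, integral_I_zero hσ, zero_mul]
      have : ∫ J, X J ∂σ = A := rfl
      rw [this]
      simp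
    set h2f : ℍ' → ℍ' := fun J => star J * W J with hh2
    have hh2e : h2f =ᵐ[σ] fun J => -(J * X J) + J * A - B := by
      refine (ae_sph hσ).mono fun J hJ => ?_
      have h1 : star J = -J := sph_star hJ
      have hjj : J * J = -1 := sph_mul_self hJ
      simp only [hh2, hW, h1]
      have : -J * (X J - A - J * B) = -(J * X J) + J * A + J * (J * B) := by
        rw [neg_mul, mul_sub, mul_sub]
        abel
      rw [this, ← mul_assoc, hjj, neg_one_mul]
      abel
    have hiN : Integrable (fun J => -(J * X J)) σ := hiJX.neg
    have hiJA : Integrable (fun J : ℍ' => J * A) σ := hiI.mul_const A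
    have hiNA : Integrable (fun J => -(J * X J) + J * A) σ := hiN.add hiJA
    have hih2 : Integrable h2f σ := (hiNA.sub (integrable_const B)).congr hh2e.symm
    have hh2int : ∫ J, h2f J ∂σ = 0 := by
      rw [integral_congr_ae hh2e,
        integral_sub hiNA (integrable_const B),
        integral_add hiN hiJA, integral_neg,
        integral_qmul_right A hiI, integral_I_zero hσ, zero_mul, integral_const]
      have hbx : ∫ J, J * X J ∂σ = -B := by rw [hBdef]; unfold bFun; rw [neg_neg]
      rw [hbx]
      simp
    have hpt : ∀ J : ℍ',
        (star (a t + J * b t) * (φ (qexp t J) - (A + J * B))).re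
          = (reCLM.comp (mulLeftCLM (star (a t)))) (W J)
            + (reCLM.comp (mulLeftCLM (star (b t)))) (h2f J) := by
      intro J
      have e0 : φ (qexp t J) - (A + J * B) = W J := by
        rw [hW]
        simp only [hX]
        rw [sub_add_eq_sub_sub]
      rw [e0]
      simp only [ContinuousLinearMap.coe_comp', Function.comp_apply, reCLM_apply,
        mulLeftCLM_apply, hh2]
      rw [star_add, star_mul, add_mul, mul_assoc, Quaternion.re_add]
    calc ∫ J, (star (a t + J * b t) * (φ (qexp t J) - (A + J * B))).re ∂σ
        = ∫ J, ((reCLM.comp (mulLeftCLM (star (a t)))) (W J)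
            + (reCLM.comp (mulLeftCLM (star (b t)))) (h2f J)) ∂σ := by
          exact integral_congr_ae (Filter.Eventually.of_forall hpt)
      _ = (reCLM.comp (mulLeftCLM (star (a t)))) (∫ J, W J ∂σ)
            + (reCLM.comp (mulLeftCLM (star (b t)))) (∫ J, h2f J ∂σ) := by
          rw [integral_add ((reCLM.comp (mulLeftCLM (star (a t)))).integrable_comp hiW)
            ((reCLM.comp (mulLeftCLM (star (b t)))).integrable_comp hih2),
            ContinuousLinearMap.integral_comp_comm _ hiW,
            ContinuousLinearMap.integral_comp_comm _ hih2]
      _ = 0 := by rw [hWint, hh2int]; simp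
  -- transfer to the product measure
  have hG2 : MemLp (GFun σ φ) 2 (bMeasure σ) := memL2_GFun hσ hcont hM
  have hint_b : Integrable (fun q => (star (g q) * (φ q - GFun σ φ q)).re) (bMeasure σ) :=
    integrable_star_mul_re hg2 (hφ2.sub hG2)
  have hint_b' : Integrable (fun q => (star (g q) * (φ q - GFun σ φ q)).re)
      (Measure.map (fun p : ℍ' × ℝ => qexp p.2 p.1) (σ.prod arcMeasure)) := hint_b
  have hmap : ∫ q, (star (g q) * (φ q - GFun σ φ q)).re ∂(bMeasure σ)
      = ∫ p : ℍ' × ℝ, (star (g (qexp p.2 p.1))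
          * (φ (qexp p.2 p.1) - GFun σ φ (qexp p.2 p.1))).re ∂(σ.prod arcMeasure) := by
    rw [bMeasure]
    exact integral_map continuous_qexpP.measurable.aemeasurable hint_b'.1
  set F' : ℍ' × ℝ → ℝ := fun p => (star (a p.2 + p.1 * b p.2)
    * (φ (qexp p.2 p.1) - (aFun σ φ p.2 + p.1 * bFun σ φ p.2))).re with hF'
  have hae' : (fun p : ℍ' × ℝ => (star (g (qexp p.2 p.1))
      * (φ (qexp p.2 p.1) - GFun σ φ (qexp p.2 p.1))).re) =ᵐ[σ.prod arcMeasure] F' := by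
    refine (ae_prod_sph hσ).mono fun p hp => ?_
    rw [hF']
    simp only
    rw [hrep p.2 p.1 hp, GFun_qexp hσ hcont hp p.2]
  have hiF : Integrable F' (σ.prod arcMeasure) := by
    have h0 : Integrable ((fun q => (star (g q) * (φ q - GFun σ φ q)).re)
        ∘ (fun p : ℍ' × ℝ => qexp p.2 p.1)) (σ.prod arcMeasure) :=
      (integrable_map_measure hint_b'.1 continuous_qexpP.measurable.aemeasurable).mp hint_b'
    exact h0.congr hae'
  rw [hmap, integral_congr_ae hae', integral_prod_symm F' hiF]
  have hz : ∀ t : ℝ, ∫ I, F' (I, t) ∂σ = 0 := fun t => inner0 t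
  simp_rw [hz]
  simp

end PhiLayer

lemma isSlice_sub {f g : ℍ' → ℍ'} (hf : IsSlice f) (hg : IsSlice g) :
    IsSlice (fun q => f q - g q) := by
  intro I hI J hJ t
  simp only
  rw [hf I hI J hJ t, hg I hI J hJ t]
  simp only [div_eq_mul_inv]
  noncomm_ring

end ProjAux

/-- If `φ : ∂B → ℍ` is continuous, then for `Σ`-almost every point
`exp(tI)` of `∂B` (expressed through the parametrization `(I, t) ↦ exp(tI)` of
`(∂B, Σ)` by `σ ⊗ dt/2π`) one has `Πφ(exp(tI)) = ∫_S (1 − IJ) φ(exp(tJ)) dσ(J)`. -/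
theorem projection_of_continuous (σ : Measure (Quaternion ℝ)) (hσ : IsSphereMeasure σ)
    (φ Pφ : Quaternion ℝ → Quaternion ℝ)
    (hcont : ContinuousOn φ (Metric.sphere (0 : Quaternion ℝ) 1))
    (hP : IsProjection σ φ Pφ) :
    ∀ᵐ p : Quaternion ℝ × ℝ ∂(σ.prod arcMeasure),
      Pφ (qexp p.2 p.1) = ∫ J, (1 - p.1 * J) * φ (qexp p.2 J) ∂σ := by
  classical
  open ProjAux in
  haveI := hσ.prob
  haveI := ProjAux.bMeasure_prob hσ
  obtain ⟨M, hM⟩ := (isCompact_sphere (0 : Quaternion ℝ) 1).exists_bound_of_continuousOn hcont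
  obtain ⟨hφ2, hPs, hP2, hPortho⟩ := hP
  have hG2 : MemLp (ProjAux.GFun σ φ) 2 (bMeasure σ) := ProjAux.memL2_GFun hσ hcont hM
  have hGs : IsSlice (ProjAux.GFun σ φ) := ProjAux.isSlice_GFun hσ hcont
  set D : Quaternion ℝ → Quaternion ℝ := fun q => ProjAux.GFun σ φ q - Pφ q with hD
  have hDs : IsSlice D := ProjAux.isSlice_sub hGs hPs
  have hD2 : MemLp D 2 (bMeasure σ) := hG2.sub hP2
  have h1 : ∫ q, (star (D q) * (φ q - Pφ q)).re ∂(bMeasure σ) = 0 := hPortho D hDs hD2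
  have h2 : ∫ q, (star (D q) * (φ q - ProjAux.GFun σ φ q)).re ∂(bMeasure σ) = 0 :=
    ProjAux.ortho hσ hcont hM hφ2 hDs hD2
  have hIδ1 : Integrable (fun q => (star (D q) * (φ q - Pφ q)).re) (bMeasure σ) :=
    ProjAux.integrable_star_mul_re hD2 (hφ2.sub hP2)
  have hIδ2 : Integrable (fun q => (star (D q) * (φ q - ProjAux.GFun σ φ q)).re) (bMeasure σ) :=
    ProjAux.integrable_star_mul_re hD2 (hφ2.sub hG2)
  have h3 : ∫ q, (star (D q) * D q).re ∂(bMeasure σ) = 0 := by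
    have e : ∀ q, (star (D q) * D q).re
        = (star (D q) * (φ q - Pφ q)).re - (star (D q) * (φ q - ProjAux.GFun σ φ q)).re := by
      intro q
      rw [← Quaternion.re_sub, ← mul_sub, sub_sub_sub_cancel_left]
    simp_rw [e]
    rw [integral_sub hIδ1 hIδ2, h1, h2, sub_zero]
  have hIdd : Integrable (fun q => ‖D q‖ * ‖D q‖) (bMeasure σ) :=
    ProjAux.integrable_norm_mul_norm hD2 hD2
  have h4 : (fun q => ‖D q‖ * ‖D q‖) =ᵐ[bMeasure σ] 0 := by
    rw [← integral_eq_zero_iff_of_nonneg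
      (fun q => mul_nonneg (norm_nonneg _) (norm_nonneg _)) hIdd]
    have e2 : ∀ q, ‖D q‖ * ‖D q‖ = (star (D q) * D q).re :=
      fun q => (ProjAux.re_star_mul_self (D q)).symm
    simp_rw [e2]
    exact h3
  have h5 : ∀ᵐ q ∂(bMeasure σ), Pφ q = ProjAux.GFun σ φ q := by
    refine h4.mono fun q hq => ?_
    have hq0 : ‖D q‖ * ‖D q‖ = 0 := hq
    have hD0 : D q = 0 := norm_eq_zero.mp (mul_self_eq_zero.mp hq0)
    have := sub_eq_zero.mp hD0
    exact this.symm
  have h5' : ∀ᵐ q ∂(Measure.map (fun p : Quaternion ℝ × ℝ => qexp p.2 p.1)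
      (σ.prod arcMeasure)), Pφ q = ProjAux.GFun σ φ q := h5
  have h6 : ∀ᵐ p : Quaternion ℝ × ℝ ∂(σ.prod arcMeasure),
      Pφ (qexp p.2 p.1) = ProjAux.GFun σ φ (qexp p.2 p.1) :=
    MeasureTheory.ae_of_ae_map ProjAux.continuous_qexpP.measurable.aemeasurable h5'
  filter_upwards [h6, ProjAux.ae_prod_sph hσ] with p hpe hpS
  rw [hpe, ProjAux.GFun_qexp hσ hcont hpS p.2, ProjAux.final_expand hσ hcont hM p.2 p.1]
end
end
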